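/- arXiv:2509.19279 — 10 statements merged into one kernel-verified Lean document; each statement's English description precedes it below -/
import Mathlib

section
/- Consider weighted-approval control by adding voters with instance (C, V, W, w, p). Let C' = {c ∈ C \ {p} : score_V(c) ≥ score_V(p)}, for c ∈ C' let B_c = {v ∈ W : v approves p but not c} and Δ_c = score_V(c) − score_V(p), and let B = {v ∈ W : v approves p}. Then: a selection of voters x : B → {0,1} satisfies ∑_{v ∈ B_c} w(v)·x(v) ≥ Δ_c + 1 for every c ∈ C' if and only if p is the unique approval winner of (C, V ∪ W') where W' = {v ∈ B : x(v) = 1}. Moreover the objective value ∑_{v∈B} x(v) equals |W'|. -/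
/-- CIP correctness for weighted-approval constructive control by adding voters:
a 0/1 selection `x` of unregistered voters approving `p` satisfies the covering
constraints `∑_{v ∈ B_c} w(v)·x(v) ≥ Δ_c + 1` for every candidate `c ≠ p` with
`score_V(c) ≥ score_V(p)` if and only if `p` is the unique approval winner of
`(C, V ∪ W')` where `W' = {v ∈ B : x v = true}`; moreover the objective value
equals `|W'|`. -/
theorem stmt4 {C ι : Type*} [Fintype C] [DecidableEq C] [DecidableEq ι]
    (app : ι → C → Bool) (w : ι → ℕ) (hw : ∀ v, 0 < w v)
    (V W : Finset ι) (hdisj : Disjoint V W) (p : C)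
    (score : Finset ι → C → ℕ)
    (hscore : ∀ (A : Finset ι) (x : C),
      score A x = ∑ v ∈ A.filter (fun v => app v x = true), w v)
    (x : ι → Bool)
    (W' : Finset ι)
    (hW' : W' = (W.filter (fun v => app v p = true)).filter (fun v => x v = true)) :
    ((∀ c : C, c ≠ p → score V p ≤ score V c →
        score V c - score V p + 1 ≤
          ∑ v ∈ (W.filter (fun v => app v p = true ∧ app v c = false)).filter
              (fun v => x v = true), w v)
      ↔ (∀ c : C, c ≠ p → score (V ∪ W') c < score (V ∪ W') p)) ∧
    (∑ v ∈ W.filter (fun v => app v p = true), (if x v then 1 else 0)) = W'.card := by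
  have hWsub : W' ⊆ W := by
    rw [hW']; exact (Finset.filter_subset _ _).trans (Finset.filter_subset _ _)
  have hsplit : ∀ c : C, score (V ∪ W') c = score V c + score W' c := by
    intro c
    rw [hscore, hscore, hscore, Finset.filter_union, Finset.sum_union]
    exact Finset.disjoint_filter_filter (hdisj.mono_right hWsub)
  have hAp : score W' p = ∑ v ∈ W', w v := by
    rw [hscore]
    congr 1
    apply Finset.filter_true_of_mem
    intro v hv
    rw [hW', Finset.mem_filter, Finset.mem_filter] at hv
    exact hv.1.2
  have hAle : ∀ c : C, score W' c ≤ score W' p := by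
    intro c
    rw [hAp, hscore]
    exact Finset.sum_le_sum_of_subset (Finset.filter_subset _ _)
  have hsum : ∀ c : C, score W' p = score W' c +
      ∑ v ∈ (W.filter (fun v => app v p = true ∧ app v c = false)).filter
        (fun v => x v = true), w v := by
    intro c
    have hBeq : (W.filter (fun v => app v p = true ∧ app v c = false)).filter
        (fun v => x v = true) = W'.filter (fun v => ¬ (app v c = true)) := by
      rw [hW']
      ext v
      simp only [Finset.mem_filter, Bool.not_eq_true]
      constructor
      · rintro ⟨⟨h1, h2, h3⟩, h4⟩; exact ⟨⟨⟨h1, h2⟩, h4⟩, h3⟩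
      · rintro ⟨⟨⟨h1, h2⟩, h4⟩, h3⟩; exact ⟨⟨h1, h2, h3⟩, h4⟩
    rw [hBeq, hAp, hscore]
    exact (Finset.sum_filter_add_sum_filter_not W' _ _).symm
  refine ⟨⟨?_, ?_⟩, ?_⟩
  · intro h c hc
    rw [hsplit, hsplit]
    by_cases hle : score V p ≤ score V c
    · have h1 := h c hc hle
      have h2 := hsum c
      omega
    · have := hAle c
      omega
  · intro h c hc hle
    have h1 := h c hc
    rw [hsplit, hsplit, hsum c] at h1
    omega
  · rw [hW', Finset.card_filter]
end

section
/- Consider weighted-approval control by deleting voters with instance (C, V, w, p). Let C' = {c ∈ C \ {p} : score_V(c) ≥ score_V(p)}, for c ∈ C' let B_c = {v ∈ V : v approves c but not p}, Δ_c = score_V(c) − score_V(p), and B = {v ∈ V : v does not approve p}. Then a selection x : B → {0,1} satisfies ∑_{v ∈ B_c} w(v)·x(v) ≥ Δ_c + 1 for every c ∈ C' if and only if p is the unique approval winner of (C, V \ V') where V' = {v ∈ B : x(v) = 1}. -/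
/-- CIP correctness for weighted-approval constructive control by deleting voters:
a 0/1 selection `x` of voters disapproving `p` satisfies the covering constraints
`∑_{v ∈ B_c} w(v)·x(v) ≥ Δ_c + 1` for every candidate `c ≠ p` with
`score_V(c) ≥ score_V(p)` if and only if `p` is the unique approval winner of
`(C, V \ V')` where `V' = {v ∈ B : x v = true}`. -/
theorem stmt5 {C ι : Type*} [Fintype C] [DecidableEq C] [DecidableEq ι]
    (app : ι → C → Bool) (w : ι → ℕ) (hw : ∀ v, 0 < w v)
    (V : Finset ι) (p : C)
    (score : Finset ι → C → ℕ)
    (hscore : ∀ (A : Finset ι) (x : C),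
      score A x = ∑ v ∈ A.filter (fun v => app v x = true), w v)
    (x : ι → Bool)
    (V' : Finset ι)
    (hV' : V' = (V.filter (fun v => app v p = false)).filter (fun v => x v = true)) :
    (∀ c : C, c ≠ p → score V p ≤ score V c →
        score V c - score V p + 1 ≤
          ∑ v ∈ (V.filter (fun v => app v c = true ∧ app v p = false)).filter
              (fun v => x v = true), w v)
      ↔ (∀ c : C, c ≠ p → score (V \ V') c < score (V \ V') p) := by
  have hsub : V' ⊆ V := by
    subst hV'
    intro v hv
    simp only [Finset.mem_filter] at hv
    exact hv.1.1
  have key : ∀ t : C, score V t =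
      score (V \ V') t + ∑ v ∈ V'.filter (fun v => app v t = true), w v := by
    intro t
    rw [hscore, hscore, ← Finset.sum_union]
    · congr 1
      rw [← Finset.filter_union, Finset.sdiff_union_of_subset hsub]
    · exact Finset.disjoint_filter_filter (Finset.sdiff_disjoint)
  have hp : V'.filter (fun v => app v p = true) = ∅ := by
    subst hV'
    ext v
    simp only [Finset.mem_filter, Finset.notMem_empty, iff_false]
    rintro ⟨⟨⟨-, h1⟩, -⟩, h2⟩
    rw [h1] at h2
    exact Bool.false_ne_true h2
  have hS : ∀ c : C, V'.filter (fun v => app v c = true) =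
      (V.filter (fun v => app v c = true ∧ app v p = false)).filter
        (fun v => x v = true) := by
    intro c
    subst hV'
    ext v
    simp only [Finset.mem_filter]
    tauto
  have hpV : score (V \ V') p = score V p := by
    rw [key p, hp]
    simp
  constructor
  · intro h c hc
    rw [hpV]
    by_cases hle : score V p ≤ score V c
    · have h1 := h c hc hle
      rw [← hS c] at h1
      have h2 := key c
      omega
    · have h2 := key c
      omega
  · intro h c hc hle
    have h1 := h c hc
    rw [hpV] at h1
    have h2 := key c
    rw [← hS c]
    omega
end

section
/- Reduction from Minimum Set Cover to approval constructive control by adding voters: given a set cover instance (U, S) with U = {x_1,…,x_n} and S = {S_1,…,S_m} covering U, construct the approval election with candidates C = U ∪ {p}, registered voters V = ∅, and for each i ∈ [m] one unregistered voter w_i approving exactly the candidates in C \ S_i. Then for every k, there exists a subfamily S' ⊆ S of size k with ⋃ S' = U if and only if there exists W' ⊆ {w_1,…,w_m} of size k such that p is the unique approval winner of (C, W'). -/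
/-- Reduction from Minimum Set Cover to approval constructive control by adding
voters. Candidates are `U ∪ {p}`; registered voters `V = ∅`; for each `i` one
unregistered voter `w_i` approving exactly `C \ S_i` (so `w_i` approves `p` and
disapproves exactly the members of `S_i`). For a set `W'` of added voters,
`p`'s approval score is `|W'|` and the score of `u ∈ U` is
`|{i ∈ W' : u ∉ S_i}|`; `p` is a unique winner iff every other candidate's score
is strictly smaller. Then for every `k` there is a subfamily of `S` of size `k`
covering `U` iff there is a set of `k` unregistered voters making `p` the unique
approval winner. -/
theorem stmt6 {α : Type*} [DecidableEq α] {m : ℕ}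
    (U : Finset α) (hU : U.Nonempty)
    (S : Fin m → Finset α) (hS : ∀ i, S i ⊆ U)
    (hcover : U ⊆ Finset.univ.biUnion S)
    (k : ℕ) :
    (∃ T : Finset (Fin m), T.card = k ∧ U ⊆ T.biUnion S) ↔
    (∃ W' : Finset (Fin m), W'.card = k ∧
      ∀ u ∈ U, (W'.filter (fun i => u ∉ S i)).card < W'.card) := by
  have key : ∀ (T : Finset (Fin m)) (u : α),
      (T.filter (fun i => u ∉ S i)).card < T.card ↔ ∃ i ∈ T, u ∈ S i := by
    intro T u
    constructor
    · intro h
      by_contra hc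
      push_neg at hc
      have : T.filter (fun i => u ∉ S i) = T := by
        apply Finset.filter_true_of_mem
        intro i hi; exact hc i hi
      rw [this] at h; exact lt_irrefl _ h
    · intro ⟨i, hi, hui⟩
      exact Finset.card_lt_card (Finset.filter_ssubset.mpr ⟨i, hi, by simp [hui]⟩)
  constructor
  · rintro ⟨T, hT, hcov⟩
    exact ⟨T, hT, fun u hu => (key T u).mpr (by simpa using Finset.mem_biUnion.mp (hcov hu))⟩
  · rintro ⟨W', hW, hwin⟩
    refine ⟨W', hW, fun u hu => ?_⟩
    obtain ⟨i, hi, hui⟩ := (key W' u).mp (hwin u hu)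
    exact Finset.mem_biUnion.mpr ⟨i, hi, hui⟩
end

section
/- The OPT values coincide under the MSC-to-approval-CCAV reduction: with the construction mapping set cover instance (U, S) to the approval election (C = U ∪ {p}, V = ∅, W = {w_i : i ∈ [m]}, where w_i approves C \ S_i), the minimum size of a set cover of U from S equals the minimum size of a subset W' ⊆ W making p the unique approval winner of (C, W'). -/
/-- The OPT values coincide under the MSC-to-approval-CCAV reduction: with
candidates `U ∪ {p}`, `V = ∅`, and for each `i` one unregistered voter `w_i`
approving exactly `C \ S_i`, the minimum size of a set cover of `U` from `S`
equals the minimum size of a subset `W'` of the unregistered voters making `p`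
the unique approval winner (where `p`'s score is `|W'|` and the score of
`u ∈ U` is `|{i ∈ W' : u ∉ S_i}|`). -/
theorem stmt7 {α : Type*} [DecidableEq α] {m : ℕ}
    (U : Finset α) (hU : U.Nonempty)
    (S : Fin m → Finset α) (hS : ∀ i, S i ⊆ U)
    (hcover : U ⊆ Finset.univ.biUnion S) :
    sInf {k : ℕ | ∃ T : Finset (Fin m), T.card = k ∧ U ⊆ T.biUnion S} =
    sInf {k : ℕ | ∃ W' : Finset (Fin m), W'.card = k ∧
      ∀ u ∈ U, (W'.filter (fun i => u ∉ S i)).card < W'.card} := by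
  congr 1
  ext k
  have key : ∀ (W' : Finset (Fin m)) (u : α),
      (W'.filter (fun i => u ∉ S i)).card < W'.card ↔ ∃ i ∈ W', u ∈ S i := by
    intro W' u
    constructor
    · intro h
      by_contra hc
      push_neg at hc
      have : W'.filter (fun i => u ∉ S i) = W' := Finset.filter_eq_self.mpr hc
      simp [this] at h
    · intro ⟨i, hi, hiu⟩
      refine Finset.card_lt_card ?_
      refine ⟨Finset.filter_subset _ _, fun hsub => ?_⟩
      have := Finset.mem_filter.mp (hsub hi)
      exact this.2 hiu
  constructor
  · rintro ⟨T, hT, hcov⟩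
    exact ⟨T, hT, fun u hu => (key T u).mpr (by
      obtain ⟨i, hi, hiu⟩ := Finset.mem_biUnion.mp (hcov hu)
      exact ⟨i, hi, hiu⟩)⟩
  · rintro ⟨W', hW, hwin⟩
    refine ⟨W', hW, fun u hu => Finset.mem_biUnion.mpr ?_⟩
    exact (key W' u).mp (hwin u hu)
end

section
/- In the plurality election constructed from a Minimum k-Union instance (U, S, k) with k > 1 — candidates C = U ∪ B ∪ {p} where B = {b_1,…,b_{n+1}}; votes: for each i ∈ [m] one vote ranking the members of S_i first then p; (k−1+N) votes ranking b_1 first; and N votes ranking p first, where N is the maximum over u ∈ U of the number of sets containing u — if D ⊆ C \ {p} is any set of candidates whose deletion makes p the unique plurality winner and D ∩ B = ∅, then the family Ŝ = {S_i ∈ S : S_i ⊆ D} has size at least k. -/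
/-- Candidates for the MkU construction: `U = Fin n`, buffers `B = Fin (n+1)`,
and the distinguished candidate `p`. -/
abbrev MCand (n : ℕ) := Fin n ⊕ (Fin (n + 1) ⊕ Unit)

/-- The distinguished candidate `p`. -/
def mp {n : ℕ} : MCand n := Sum.inr (Sum.inr ())

/-- Buffer candidate `b_j`. -/
def mb {n : ℕ} (j : Fin (n + 1)) : MCand n := Sum.inr (Sum.inl j)

/-- Element candidate `u`. -/
def mu {n : ℕ} (u : Fin n) : MCand n := Sum.inl u

/-- `N` = the maximum over `u ∈ U` of the number of sets containing `u`. -/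
def NVal {n m : ℕ} (S : Fin m → Finset (Fin n)) : ℕ :=
  Finset.univ.sup (fun u : Fin n => (Finset.univ.filter (fun i => u ∈ S i)).card)

/-- A vote is a preference list (most preferred first); its top choice after
deleting the candidates in `D` is the first surviving entry. -/
def topAfter {C : Type*} [DecidableEq C] (D : Finset C) (l : List C) : Option C :=
  (l.filter (fun c => decide (c ∉ D))).head?

/-- Plurality score of candidate `c` after deleting `D`: the number of votes
whose top surviving candidate is `c`. -/
def plScore {C : Type*} [DecidableEq C] (votes : List (List C)) (D : Finset C)
    (c : C) : ℕ :=
  votes.countP (fun l => decide (topAfter D l = some c))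

/-- Type-1 vote for set `S_i`: members of `S_i`, then `p`, then the rest. -/
noncomputable def type1 {n m : ℕ} (S : Fin m → Finset (Fin n)) (i : Fin m) : List (MCand n) :=
  ((S i).toList.map mu) ++ [mp] ++
    (Finset.univ.toList.filter
      (fun c : MCand n => decide (c ∉ ((S i).image mu ∪ {mp}))))

/-- Type-2 vote: `b_1 > ⋯ > b_{n+1} > (members of U) > p`. -/
def type2 (n : ℕ) : List (MCand n) :=
  ((List.finRange (n + 1)).map mb) ++ ((List.finRange n).map mu) ++ [mp]

/-- Type-3 vote: `p` first, then the rest. -/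
noncomputable def type3 (n : ℕ) : List (MCand n) :=
  mp :: (Finset.univ.toList.filter (fun c : MCand n => decide (c ≠ mp)))

/-- The election's votes: one Type-1 vote per set, `k - 1 + N` Type-2 votes and
`N` Type-3 votes. -/
noncomputable def mkuVotes {n m : ℕ} (S : Fin m → Finset (Fin n)) (k : ℕ) :
    List (List (MCand n)) :=
  ((List.finRange m).map (type1 S)) ++
    List.replicate (k - 1 + NVal S) (type2 n) ++
    List.replicate (NVal S) (type3 n)

lemma countP_replicate {α} (p : α → Bool) (a : α) (N : ℕ) :
    (List.replicate N a).countP p = if p a then N else 0 := by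
  induction N with
  | zero => simp
  | succ N ih => simp [List.replicate_succ, List.countP_cons, ih]; split <;> simp_all

lemma top2 {n : ℕ} (D : Finset (MCand n)) (h : mb 0 ∉ D) :
    topAfter D (type2 n) = some (mb (0 : Fin (n+1))) := by
  have : type2 n = mb 0 :: (((List.finRange n).map (Fin.succ)).map mb ++
      ((List.finRange n).map mu) ++ [mp]) := by
    simp [type2, List.finRange_succ, List.map_map, Function.comp]
  rw [topAfter, this]
  simp [List.filter_cons, h]

lemma top3 {n : ℕ} (D : Finset (MCand n)) (h : mp ∉ D) :
    topAfter D (type3 n) = some mp := by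
  rw [topAfter, type3]
  simp [List.filter_cons, h]

lemma top1 {n m : ℕ} (S : Fin m → Finset (Fin n)) (i : Fin m) (D : Finset (MCand n))
    (h : topAfter D (type1 S i) = some mp) : (S i).image mu ⊆ D := by
  intro x hx
  by_contra hxD
  obtain ⟨u, hu, rfl⟩ := Finset.mem_image.mp hx
  rw [topAfter, type1, List.filter_append, List.filter_append] at h
  have hmem : mu u ∈ ((S i).toList.map mu).filter (fun c => decide (c ∉ D)) := by
    refine List.mem_filter.mpr ⟨List.mem_map.mpr ⟨u, ?_, rfl⟩, by simpa using hxD⟩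
    simpa using hu
  rcases List.exists_cons_of_ne_nil (List.ne_nil_of_mem hmem) with ⟨a, t, he⟩
  rw [he] at h
  simp only [List.cons_append, List.head?_cons, Option.some.injEq] at h
  have : a ∈ ((S i).toList.map mu) := by
    have := List.mem_filter.mp (he ▸ (List.mem_cons_self : a ∈ a :: t))
    exact this.1
  obtain ⟨v, _, rfl⟩ := List.mem_map.mp this
  exact absurd h (by simp [mu, mp])


/-- In the plurality election constructed from an MkU instance `(U, S, k)` with
`k > 1`, if `D ⊆ C \ {p}` makes `p` the unique plurality winner and `D` contains
no buffer candidate, then at least `k` of the sets `S_i` satisfy `S_i ⊆ D`. -/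
theorem stmt9 {n m : ℕ} (hn : 0 < n)
    (S : Fin m → Finset (Fin n)) (hSne : ∀ i, (S i).Nonempty)
    (k : ℕ) (hk : 1 < k) (hkm : k ≤ m)
    (D : Finset (MCand n)) (hpD : mp ∉ D)
    (hB : ∀ j : Fin (n + 1), mb j ∉ D)
    (hwin : ∀ c : MCand n, c ∉ D → c ≠ mp →
      plScore (mkuVotes S k) D c < plScore (mkuVotes S k) D mp) :
    k ≤ (Finset.univ.filter (fun i : Fin m => (S i).image mu ⊆ D)).card := by
  have hbne : mb (0 : Fin (n+1)) ≠ mp := by simp [mb, mp]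
  have hwin0 := hwin (mb 0) (hB 0) hbne
  -- lower bound on b1's score
  have hb1 : k - 1 + NVal S ≤ plScore (mkuVotes S k) D (mb 0) := by
    rw [plScore, mkuVotes, List.countP_append, List.countP_append]
    have : (List.replicate (k - 1 + NVal S) (type2 n)).countP
        (fun l => decide (topAfter D l = some (mb 0))) = k - 1 + NVal S := by
      rw [countP_replicate]
      simp [top2 D (hB 0)]
    omega
  -- upper bound on p's score
  have hp : plScore (mkuVotes S k) D mp ≤
      (Finset.univ.filter (fun i : Fin m => (S i).image mu ⊆ D)).card + NVal S := by
    rw [plScore, mkuVotes, List.countP_append, List.countP_append]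
    have h2 : (List.replicate (k - 1 + NVal S) (type2 n)).countP
        (fun l => decide (topAfter D l = some mp)) = 0 := by
      rw [countP_replicate]
      simp [top2 D (hB 0), hbne.symm, mp, mb]
    have h3 : (List.replicate (NVal S) (type3 n)).countP
        (fun l => decide (topAfter D l = some mp)) ≤ NVal S := by
      rw [countP_replicate]; split <;> omega
    have h1 : ((List.finRange m).map (type1 S)).countP
        (fun l => decide (topAfter D l = some mp)) ≤
        (Finset.univ.filter (fun i : Fin m => (S i).image mu ⊆ D)).card := by
      rw [List.countP_map]
      have hmono : (List.finRange m).countP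
          ((fun l => decide (topAfter D l = some mp)) ∘ type1 S) ≤
          (List.finRange m).countP (fun i => decide ((S i).image mu ⊆ D)) := by
        apply List.countP_mono_left
        intro i _ hi
        simp only [Function.comp, decide_eq_true_eq] at hi ⊢
        exact top1 S i D hi
      refine hmono.trans ?_
      rw [List.countP_eq_length_filter]
      have : (Finset.univ.filter (fun i : Fin m => (S i).image mu ⊆ D)).card =
          ((List.finRange m).filter (fun i => decide ((S i).image mu ⊆ D))).length := by
        rw [Fin.univ_def]
        simp [Finset.filter, Finset.card, Multiset.filter_coe]
      omega
    omega
  omega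
end

section
/- The OPT values coincide in the MkU-to-plurality-CCDC reduction: for an MkU instance (U, S, k) with k > 1 and the constructed plurality election (C, V, p), the minimum of |⋃_{S ∈ S'} S| over families S' ⊆ S with |S'| = k equals the minimum of |D| over deletion sets D ⊆ C \ {p} making p the unique plurality winner of (C \ D, V). -/
section helpers
variable {n m : ℕ}

lemma mu_ne_mp (u : Fin n) : (mu u : MCand n) ≠ mp := by simp [mu, mp]
lemma mb_ne_mp (j : Fin (n+1)) : (mb j : MCand n) ≠ mp := by simp [mb, mp]
lemma mu_ne_mb (u : Fin n) (j : Fin (n+1)) : (mu u : MCand n) ≠ mb j := by simp [mu, mb]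
lemma mu_inj : Function.Injective (mu (n := n)) := fun a b h => by simpa [mu] using h

lemma countP_finRange (p : Fin m → Prop) [DecidablePred p] :
    (List.finRange m).countP (fun i => decide (p i)) = (Finset.univ.filter p).card := by
  rw [Fin.univ_def]
  simp [Finset.filter, Finset.card, List.countP_eq_length_filter, Multiset.filter_coe]

lemma topAfter_append {C : Type*} [DecidableEq C] (D : Finset C) (l₁ l₂ : List C) :
    topAfter D (l₁ ++ l₂) = (topAfter D l₁).or (topAfter D l₂) := by
  simp only [topAfter, List.filter_append, List.head?_append]

lemma topAfter_single {C : Type*} [DecidableEq C] {D : Finset C} {c : C} (h : c ∉ D) :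
    topAfter D [c] = some c := by
  simp [topAfter, h]

lemma topAfter_type3 {D : Finset (MCand n)} (hD : mp ∉ D) :
    topAfter D (type3 n) = some mp := by
  rw [type3, show (mp :: (Finset.univ.toList.filter
      (fun c : MCand n => decide (c ≠ mp)))) = [mp] ++ (Finset.univ.toList.filter
      (fun c : MCand n => decide (c ≠ mp))) from rfl, topAfter_append, topAfter_single hD]
  rfl

lemma topAfter_type1 {D : Finset (MCand n)} (hD : mp ∉ D)
    (S : Fin m → Finset (Fin n)) (i : Fin m) :
    (topAfter D (type1 S i) = some mp ∧ ∀ u ∈ S i, mu u ∈ D) ∨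
    (∃ u ∈ S i, mu u ∉ D ∧ topAfter D (type1 S i) = some (mu u)) := by
  rw [type1, topAfter_append, topAfter_append, topAfter_single hD]
  by_cases h : ∀ u ∈ S i, mu u ∈ D
  · left
    have hnil : topAfter D ((S i).toList.map mu) = none := by
      rw [topAfter, List.head?_eq_none_iff, List.filter_eq_nil_iff]
      rintro c hc
      simp only [List.mem_map] at hc
      obtain ⟨u, hu, rfl⟩ := hc
      simpa using h u (by simpa using hu)
    rw [hnil]
    exact ⟨rfl, h⟩
  · right
    push_neg at h
    obtain ⟨u, hu, hud⟩ := h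
    have hne : (((S i).toList.map mu).filter (fun c => decide (c ∉ D))) ≠ [] := by
      intro hnil
      have := List.filter_eq_nil_iff.mp hnil (mu u)
        (List.mem_map.mpr ⟨u, by simpa using hu, rfl⟩)
      simp [hud] at this
    obtain ⟨c, l', hcl⟩ := List.exists_cons_of_ne_nil hne
    have hc : c ∈ (((S i).toList.map mu).filter (fun c => decide (c ∉ D))) := by
      rw [hcl]; exact List.mem_cons_self
    have hc2 := List.mem_filter.mp hc
    obtain ⟨v, hv, rfl⟩ := List.mem_map.mp hc2.1
    have hhead : topAfter D ((S i).toList.map mu) = some (mu v) := by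
      rw [topAfter, hcl]; rfl
    rw [hhead]
    exact ⟨v, by simpa using hv, by simpa using hc2.2, rfl⟩

lemma t1_mp_iff {D : Finset (MCand n)} (hD : mp ∉ D)
    (S : Fin m → Finset (Fin n)) (i : Fin m) :
    topAfter D (type1 S i) = some mp ↔ ∀ u ∈ S i, mu u ∈ D := by
  rcases topAfter_type1 hD S i with ⟨h1, h2⟩ | ⟨u, hu, hud, h1⟩
  · rw [h1]; exact iff_of_true rfl h2
  · rw [h1]
    constructor
    · intro h; exact absurd (Option.some_injective _ h) (mu_ne_mp u)
    · intro h; exact absurd (h u hu) hud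

lemma t1_mu {D : Finset (MCand n)} (hD : mp ∉ D)
    (S : Fin m → Finset (Fin n)) (i : Fin m) (u : Fin n)
    (h : topAfter D (type1 S i) = some (mu u)) : u ∈ S i := by
  rcases topAfter_type1 hD S i with ⟨h1, _⟩ | ⟨v, hv, _, h1⟩
  · rw [h1] at h
    exact absurd (Option.some_injective _ h.symm) (mu_ne_mp u)
  · rw [h1] at h; rwa [← mu_inj (Option.some_injective _ h)]

lemma t1_ne_mb {D : Finset (MCand n)} (hD : mp ∉ D)
    (S : Fin m → Finset (Fin n)) (i : Fin m) (j : Fin (n+1)) :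
    topAfter D (type1 S i) ≠ some (mb j) := by
  rcases topAfter_type1 hD S i with ⟨h1, _⟩ | ⟨v, _, _, h1⟩ <;> rw [h1] <;> intro h
  · exact (mb_ne_mp j) (Option.some_injective _ h).symm
  · exact (mu_ne_mb v j) (Option.some_injective _ h)

lemma topAfter_type2 {D : Finset (MCand n)} (j : Fin (n+1)) (hj : mb j ∉ D) :
    ∃ j', mb j' ∉ D ∧ topAfter D (type2 n) = some (mb j') := by
  rw [type2, topAfter_append, topAfter_append]
  have hne : (((List.finRange (n+1)).map mb).filter (fun c => decide (c ∉ D))) ≠ [] := by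
    intro hnil
    have := List.filter_eq_nil_iff.mp hnil (mb j)
      (List.mem_map.mpr ⟨j, List.mem_finRange j, rfl⟩)
    simp [hj] at this
  obtain ⟨c, l', hcl⟩ := List.exists_cons_of_ne_nil hne
  have hc : c ∈ (((List.finRange (n+1)).map mb).filter (fun c => decide (c ∉ D))) := by
    rw [hcl]; exact List.mem_cons_self
  have hc2 := List.mem_filter.mp hc
  obtain ⟨j', _, rfl⟩ := List.mem_map.mp hc2.1
  have hhead : topAfter D ((List.finRange (n+1)).map mb) = some (mb j') := by
    rw [topAfter, hcl]; rfl
  rw [hhead]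
  exact ⟨j', by simpa using hc2.2, rfl⟩

lemma plScore_eq (S : Fin m → Finset (Fin n)) (k : ℕ) (D : Finset (MCand n))
    (c : MCand n) :
    plScore (mkuVotes S k) D c =
      (List.finRange m).countP (fun i => decide (topAfter D (type1 S i) = some c))
      + (if topAfter D (type2 n) = some c then k - 1 + NVal S else 0)
      + (if topAfter D (type3 n) = some c then NVal S else 0) := by
  simp only [plScore, mkuVotes, List.countP_append, List.countP_map, List.countP_replicate,
    Function.comp, decide_eq_true_eq]
  rfl

end helpers

/-- The OPT values coincide in the MkU-to-plurality-CCDC reduction: the minimum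
of `|⋃_{S ∈ S'} S|` over families `S' ⊆ S` with `|S'| = k` equals the minimum
of `|D|` over deletion sets `D ⊆ C \ {p}` making `p` the unique plurality
winner of `(C \ D, V)`. -/
theorem stmt11 {n m : ℕ} (hn : 0 < n)
    (S : Fin m → Finset (Fin n)) (hSne : ∀ i, (S i).Nonempty)
    (k : ℕ) (hk : 1 < k) (hkm : k ≤ m) :
    sInf {c : ℕ | ∃ T : Finset (Fin m), T.card = k ∧ (T.biUnion S).card = c} =
    sInf {c : ℕ | ∃ D : Finset (MCand n), mp ∉ D ∧
      (∀ x : MCand n, x ∉ D → x ≠ mp →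
        plScore (mkuVotes S k) D x < plScore (mkuVotes S k) D mp) ∧
      D.card = c} := by
  have forward : ∀ T : Finset (Fin m), T.card = k →
      (mp ∉ (T.biUnion S).image mu ∧
       (∀ x : MCand n, x ∉ (T.biUnion S).image mu → x ≠ mp →
         plScore (mkuVotes S k) ((T.biUnion S).image mu) x <
         plScore (mkuVotes S k) ((T.biUnion S).image mu) mp) ∧
       ((T.biUnion S).image mu).card = (T.biUnion S).card) := by
    intro T hT
    set D := (T.biUnion S).image mu with hDdef
    have hmpD : mp ∉ D := by
      simp only [hDdef, Finset.mem_image]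
      rintro ⟨u, -, h⟩
      exact mu_ne_mp u h
    have hbD : ∀ j : Fin (n+1), mb j ∉ D := by
      intro j
      simp only [hDdef, Finset.mem_image]
      rintro ⟨u, -, h⟩
      exact mu_ne_mb u j h
    refine ⟨hmpD, ?_, Finset.card_image_of_injective _ mu_inj⟩
    obtain ⟨j', hj'D, hj'top⟩ := topAfter_type2 (D := D) 0 (hbD 0)
    have hscoremp : k + NVal S ≤ plScore (mkuVotes S k) D mp := by
      rw [plScore_eq, topAfter_type3 hmpD, if_pos rfl]
      have heq : (List.finRange m).countP
          (fun i => decide (topAfter D (type1 S i) = some mp))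
          = (Finset.univ.filter (fun i => topAfter D (type1 S i) = some mp)).card :=
        countP_finRange _
      have hsubT : T ⊆ Finset.univ.filter (fun i => topAfter D (type1 S i) = some mp) := by
        intro i hi
        simp only [Finset.mem_filter, Finset.mem_univ, true_and]
        rw [t1_mp_iff hmpD]
        intro u hu
        exact Finset.mem_image_of_mem mu (Finset.mem_biUnion.mpr ⟨i, hi, hu⟩)
      have h1 := Finset.card_le_card hsubT
      rw [hT] at h1
      rw [heq]
      omega
    intro x hxD hxp
    rcases x with u | j | ⟨⟩
    · show plScore (mkuVotes S k) D (mu u) < plScore (mkuVotes S k) D mp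
      have hbound : plScore (mkuVotes S k) D (mu u) ≤ NVal S := by
        rw [plScore_eq]
        have h2 : topAfter D (type2 n) ≠ some (mu u) := by
          rw [hj'top]; intro h
          exact (mu_ne_mb u j') (Option.some_injective _ h).symm
        have h3 : topAfter D (type3 n) ≠ some (mu u) := by
          rw [topAfter_type3 hmpD]; intro h
          exact (mu_ne_mp u) (Option.some_injective _ h).symm
        rw [if_neg h2, if_neg h3]
        have ha : (List.finRange m).countP
            (fun i => decide (topAfter D (type1 S i) = some (mu u)))
            ≤ (List.finRange m).countP (fun i => decide (u ∈ S i)) := by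
          apply List.countP_mono_left
          intro i _ h
          simp only [decide_eq_true_eq] at h ⊢
          exact t1_mu hmpD S i u h
        have hb : (List.finRange m).countP (fun i => decide (u ∈ S i))
            = (Finset.univ.filter (fun i => u ∈ S i)).card := countP_finRange _
        have hc : (Finset.univ.filter (fun i => u ∈ S i)).card ≤ NVal S := by
          rw [NVal]
          exact Finset.le_sup (f := fun v : Fin n =>
            (Finset.univ.filter (fun i => v ∈ S i)).card) (Finset.mem_univ u)
        omega
      omega
    · show plScore (mkuVotes S k) D (mb j) < plScore (mkuVotes S k) D mp
      have hbound : plScore (mkuVotes S k) D (mb j) ≤ k - 1 + NVal S := by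
        rw [plScore_eq]
        have h1 : (List.finRange m).countP
            (fun i => decide (topAfter D (type1 S i) = some (mb j))) = 0 := by
          rw [List.countP_eq_zero]
          intro i _
          simpa using t1_ne_mb hmpD S i j
        have h3 : topAfter D (type3 n) ≠ some (mb j) := by
          rw [topAfter_type3 hmpD]; intro h
          exact (mb_ne_mp j) (Option.some_injective _ h).symm
        rw [h1, if_neg h3]
        split <;> omega
      omega
    · exact absurd rfl hxp
  have backward : ∀ D : Finset (MCand n), mp ∉ D →
      (∀ x : MCand n, x ∉ D → x ≠ mp →
        plScore (mkuVotes S k) D x < plScore (mkuVotes S k) D mp) →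
      (∃ j : Fin (n+1), mb j ∉ D) →
      ∃ T : Finset (Fin m), T.card = k ∧ (T.biUnion S).card ≤ D.card := by
    rintro D hmpD hw ⟨j, hj⟩
    obtain ⟨j', hj'D, hj'top⟩ := topAfter_type2 j hj
    have hsb : k - 1 + NVal S ≤ plScore (mkuVotes S k) D (mb j') := by
      rw [plScore_eq, hj'top, if_pos rfl]
      omega
    have hwin := hw (mb j') hj'D (mb_ne_mp j')
    have hscoremp : plScore (mkuVotes S k) D mp
        ≤ (Finset.univ.filter (fun i => ∀ u ∈ S i, mu u ∈ D)).card + NVal S := by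
      rw [plScore_eq, topAfter_type3 hmpD, if_pos rfl]
      have h2 : topAfter D (type2 n) ≠ some mp := by
        rw [hj'top]; intro h
        exact (mb_ne_mp j') (Option.some_injective _ h)
      rw [if_neg h2]
      have h1 : (List.finRange m).countP
          (fun i => decide (topAfter D (type1 S i) = some mp))
          = (Finset.univ.filter (fun i => ∀ u ∈ S i, mu u ∈ D)).card := by
        rw [← countP_finRange]
        apply List.countP_congr
        intro i _
        simp only [decide_eq_true_eq]
        exact t1_mp_iff hmpD S i
      omega
    have hkt : k ≤ (Finset.univ.filter (fun i => ∀ u ∈ S i, mu u ∈ D)).card := by omega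
    obtain ⟨T, hTsub, hTcard⟩ := Finset.exists_subset_card_eq hkt
    refine ⟨T, hTcard, ?_⟩
    have hsub : (T.biUnion S).image mu ⊆ D := by
      intro x hx
      simp only [Finset.mem_image, Finset.mem_biUnion] at hx
      obtain ⟨u, ⟨i, hiT, hu⟩, rfl⟩ := hx
      have hT2 := hTsub hiT
      simp only [Finset.mem_filter] at hT2
      exact hT2.2 u hu
    have := Finset.card_le_card hsub
    rwa [Finset.card_image_of_injective _ mu_inj] at this
  obtain ⟨T₀, -, hT₀⟩ := Finset.exists_subset_card_eq
    (s := (Finset.univ : Finset (Fin m))) (n := k) (by simpa using hkm)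
  have hAne : Set.Nonempty {c : ℕ | ∃ T : Finset (Fin m), T.card = k ∧ (T.biUnion S).card = c} :=
    ⟨_, T₀, hT₀, rfl⟩
  have hBne : Set.Nonempty {c : ℕ | ∃ D : Finset (MCand n), mp ∉ D ∧
      (∀ x : MCand n, x ∉ D → x ≠ mp →
        plScore (mkuVotes S k) D x < plScore (mkuVotes S k) D mp) ∧ D.card = c} := by
    obtain ⟨h1, h2, h3⟩ := forward T₀ hT₀
    exact ⟨_, _, h1, h2, rfl⟩
  apply le_antisymm
  · obtain ⟨D, hD1, hD2, hD3⟩ := Nat.sInf_mem hBne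
    by_cases hball : ∃ j : Fin (n+1), mb j ∉ D
    · obtain ⟨T, hTk, hTle⟩ := backward D hD1 hD2 hball
      have hle : sInf {c : ℕ | ∃ T : Finset (Fin m), T.card = k ∧ (T.biUnion S).card = c}
          ≤ (T.biUnion S).card := Nat.sInf_le ⟨T, hTk, rfl⟩
      omega
    · push_neg at hball
      have hsubb : (Finset.univ.image (mb (n := n))) ⊆ D := by
        intro x hx
        simp only [Finset.mem_image] at hx
        obtain ⟨j, -, rfl⟩ := hx
        exact hball j
      have hcard : n + 1 ≤ D.card := by
        have h := Finset.card_le_card hsubb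
        rwa [Finset.card_image_of_injective _
          (fun a b h => by simpa [mb] using h), Finset.card_univ, Fintype.card_fin] at h
      have hle : sInf {c : ℕ | ∃ T : Finset (Fin m), T.card = k ∧ (T.biUnion S).card = c}
          ≤ (T₀.biUnion S).card := Nat.sInf_le ⟨T₀, hT₀, rfl⟩
      have hn2 : (T₀.biUnion S).card ≤ n := by
        have := Finset.card_le_card (Finset.subset_univ (T₀.biUnion S))
        simpa using this
      omega
  · obtain ⟨T, hTk, hTc⟩ := Nat.sInf_mem hAne
    obtain ⟨h1, h2, h3⟩ := forward T hTk
    have hle : sInf {c : ℕ | ∃ D : Finset (MCand n), mp ∉ D ∧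
        (∀ x : MCand n, x ∉ D → x ≠ mp →
          plScore (mkuVotes S k) D x < plScore (mkuVotes S k) D mp) ∧ D.card = c}
        ≤ ((T.biUnion S).image mu).card := Nat.sInf_le ⟨_, h1, h2, rfl⟩
    omega
end

section
/- In the Hitting-Set-to-plurality-DCUDC construction, if B' ⊆ B is a hitting set of S with |B'| ≤ k, then deleting the candidate set D = B \ B' makes w the unique plurality winner: score(w) = 2(m−k') + 2n(k+1) + 5 ≥ 2(m−k) + 2n(k+1) + 5 > score(c) = 2(m−k) + 2n(k+1) + 4, where k' = |B'| — more precisely, in the election (C \ D, V) the score of w strictly exceeds the score of c and the score of every remaining b_j. -/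
/-- Candidates for the Hitting-Set construction: `B = Fin m` together with the
two special candidates `c` and `w`. -/
abbrev HCand (m : ℕ) := Fin m ⊕ Bool

/-- The distinguished candidate `c`. -/
def hcand {m : ℕ} : HCand m := Sum.inr true

/-- The candidate `w`. -/
def hwand {m : ℕ} : HCand m := Sum.inr false

/-- The candidate `b_j`. -/
def hb {m : ℕ} (j : Fin m) : HCand m := Sum.inl j

/-- Vote `c > w > ⋯`. -/
def hv1 (m : ℕ) : List (HCand m) := [hcand, hwand] ++ (List.finRange m).map hb

/-- Vote `w > c > ⋯`. -/
def hv2 (m : ℕ) : List (HCand m) := [hwand, hcand] ++ (List.finRange m).map hb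

/-- Vote `S_i > c > ⋯` (members of `S_i`, then `c`, then the rest). -/
noncomputable def hv3 {m n : ℕ} (S : Fin n → Finset (Fin m)) (i : Fin n) :
    List (HCand m) :=
  ((S i).toList.map hb) ++ [hcand] ++
    (Finset.univ.toList.filter
      (fun x : HCand m => decide (x ∉ ((S i).image hb ∪ {hcand}))))

/-- Vote `b_j > w > ⋯`. -/
noncomputable def hv4 {m : ℕ} (j : Fin m) : List (HCand m) :=
  [hb j, hwand] ++
    (Finset.univ.toList.filter
      (fun x : HCand m => decide (x ∉ ({hb j, hwand} : Finset (HCand m)))))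

/-- The votes of the constructed election: `2(m-k)+2n(k+1)+4` votes `c > w > ⋯`,
`2n(k+1)+5` votes `w > c > ⋯`, for each `i` `2(k+1)` votes `S_i > c > ⋯`, and
for each `j` two votes `b_j > w > ⋯`. -/
noncomputable def hsVotes {m n : ℕ} (S : Fin n → Finset (Fin m)) (k : ℕ) :
    List (List (HCand m)) :=
  List.replicate (2 * (m - k) + 2 * n * (k + 1) + 4) (hv1 m) ++
    List.replicate (2 * n * (k + 1) + 5) (hv2 m) ++
    (((List.finRange n).map (fun i => List.replicate (2 * (k + 1)) (hv3 S i))).flatten) ++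
    (((List.finRange m).map (fun j => List.replicate 2 (hv4 j))).flatten)

/-- In the Hitting-Set-to-plurality-DCUDC construction, if `B'` is a hitting set
of `S` with `|B'| ≤ k`, then deleting `D = B \ B'` gives `w` score
`2(m - |B'|) + 2n(k+1) + 5`, gives `c` score `2(m-k) + 2n(k+1) + 4`, and `w`'s
score strictly exceeds the score of `c` and of every remaining `b_j`. -/
theorem stmt12 {m n : ℕ} (S : Fin n → Finset (Fin m))
    (k : ℕ) (hk : 0 < k) (hkm : k ≤ m)
    (B' : Finset (Fin m)) (hhit : ∀ i, (S i ∩ B').Nonempty) (hcard : B'.card ≤ k)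
    (D : Finset (HCand m)) (hD : D = (Finset.univ \ B').image hb) :
    plScore (hsVotes S k) D hwand = 2 * (m - B'.card) + 2 * n * (k + 1) + 5 ∧
    plScore (hsVotes S k) D hcand = 2 * (m - k) + 2 * n * (k + 1) + 4 ∧
    plScore (hsVotes S k) D hcand < plScore (hsVotes S k) D hwand ∧
    (∀ j ∈ B', plScore (hsVotes S k) D (hb j) < plScore (hsVotes S k) D hwand) := by
  classical
  have hcD : (hcand : HCand m) ∉ D := by simp [hD, hcand, hb]
  have hwD : (hwand : HCand m) ∉ D := by simp [hD, hwand, hb]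
  have hbD : ∀ j : Fin m, (hb j ∈ D) ↔ j ∉ B' := by intro j; simp [hD, hb]
  have top1 : topAfter D (hv1 m) = some hcand := by
    simp [topAfter, hv1, List.filter_cons, hcD]
  have top2 : topAfter D (hv2 m) = some hwand := by
    simp [topAfter, hv2, List.filter_cons, hwD]
  have top3 : ∀ i, ∃ j ∈ S i, topAfter D (hv3 S i) = some (hb j) := by
    intro i
    obtain ⟨b, hbmem⟩ := hhit i
    rw [Finset.mem_inter] at hbmem
    have hbnD : hb b ∉ D := fun h => (hbD b).mp h hbmem.2
    have hmem : hb b ∈ ((S i).toList.map hb).filter (fun c => decide (c ∉ D)) := by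
      simp only [List.mem_filter, List.mem_map, decide_eq_true_eq]
      exact ⟨⟨b, by simpa using hbmem.1, rfl⟩, hbnD⟩
    have hne' := List.ne_nil_of_mem hmem
    obtain ⟨x, xs, hx⟩ := List.exists_cons_of_ne_nil hne'
    have hxmem : x ∈ ((S i).toList.map hb).filter (fun c => decide (c ∉ D)) := by
      rw [hx]; exact List.mem_cons_self
    obtain ⟨j, hj, rfl⟩ := List.mem_map.mp (List.mem_filter.mp hxmem).1
    refine ⟨j, by simpa using hj, ?_⟩
    unfold topAfter hv3
    rw [List.filter_append, List.filter_append, List.head?_append, List.head?_append, hx]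
    rfl
  have top4 : ∀ j : Fin m, topAfter D (hv4 j) = if j ∈ B' then some (hb j) else some hwand := by
    intro j
    by_cases hj : j ∈ B'
    · have h1 : hb j ∉ D := fun h => (hbD j).mp h hj
      simp [topAfter, hv4, List.filter_cons, h1, hj]
    · have h1 : hb j ∈ D := (hbD j).mpr hj
      simp [topAfter, hv4, List.filter_cons, h1, hwD, hj]
  have score_eq : ∀ x : HCand m, plScore (hsVotes S k) D x =
      (if (hcand : HCand m) = x then 2 * (m - k) + 2 * n * (k + 1) + 4 else 0) +
      (if (hwand : HCand m) = x then 2 * n * (k + 1) + 5 else 0) +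
      (∑ i : Fin n, if topAfter D (hv3 S i) = some x then 2 * (k + 1) else 0) +
      (∑ j : Fin m, if topAfter D (hv4 j) = some x then 2 else 0) := by
    intro x
    simp only [plScore, hsVotes, List.countP_append, List.countP_flatten, List.map_map,
      Function.comp, List.countP_replicate, top1, top2, decide_eq_true_eq, Option.some.injEq,
      ← Fin.sum_univ_def]
  have hcw : ¬ ((hcand : HCand m) = hwand) := by simp [hcand, hwand]
  have hwc : ¬ ((hwand : HCand m) = hcand) := by simp [hcand, hwand]
  -- score of w
  have e3w : (∑ i : Fin n, if topAfter D (hv3 S i) = some (hwand : HCand m) then 2 * (k + 1) else 0) = 0 := by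
    refine Finset.sum_eq_zero fun i _ => if_neg ?_
    obtain ⟨j, _, hj⟩ := top3 i
    rw [hj]; simp [hb, hwand]
  have e4w : (∑ j : Fin m, if topAfter D (hv4 j) = some (hwand : HCand m) then 2 else 0)
      = 2 * (m - B'.card) := by
    have step : ∀ j : Fin m, (if topAfter D (hv4 j) = some (hwand : HCand m) then 2 else 0)
        = if j ∈ B' then 0 else 2 := by
      intro j; rw [top4]; by_cases hj : j ∈ B' <;> simp [hj, hb, hwand]
    rw [Finset.sum_congr rfl (fun j _ => step j), Finset.sum_ite, Finset.sum_const,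
      Finset.sum_const, smul_eq_mul, smul_eq_mul]
    have hfc : (Finset.univ.filter (fun j : Fin m => ¬ j ∈ B')) = B'ᶜ := by ext j; simp
    rw [hfc, Finset.card_compl]
    simp [Fintype.card_fin, Nat.mul_comm]
  have sw : plScore (hsVotes S k) D hwand = 2 * (m - B'.card) + 2 * n * (k + 1) + 5 := by
    rw [score_eq, if_neg hcw, if_pos rfl, e3w, e4w]; omega
  -- score of c
  have e3c : (∑ i : Fin n, if topAfter D (hv3 S i) = some (hcand : HCand m) then 2 * (k + 1) else 0) = 0 := by
    refine Finset.sum_eq_zero fun i _ => if_neg ?_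
    obtain ⟨j, _, hj⟩ := top3 i
    rw [hj]; simp [hb, hcand]
  have e4c : (∑ j : Fin m, if topAfter D (hv4 j) = some (hcand : HCand m) then 2 else 0) = 0 := by
    refine Finset.sum_eq_zero fun j _ => if_neg ?_
    rw [top4]; by_cases hj : j ∈ B' <;> simp [hj, hb, hcand, hwand]
  have sc : plScore (hsVotes S k) D hcand = 2 * (m - k) + 2 * n * (k + 1) + 4 := by
    rw [score_eq, if_pos rfl, if_neg hwc, e3c, e4c]
  refine ⟨sw, sc, by rw [sw, sc]; omega, ?_⟩
  intro j hj
  have hbb : plScore (hsVotes S k) D (hb j) ≤ n * (2 * (k + 1)) + 2 := by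
    rw [score_eq, if_neg (by simp [hcand, hb]), if_neg (by simp [hwand, hb])]
    have b3 : (∑ i : Fin n, if topAfter D (hv3 S i) = some (hb j) then 2 * (k + 1) else 0)
        ≤ n * (2 * (k + 1)) := by
      calc (∑ i : Fin n, if topAfter D (hv3 S i) = some (hb j) then 2 * (k + 1) else 0)
          ≤ ∑ _i : Fin n, 2 * (k + 1) :=
            Finset.sum_le_sum fun i _ => by split <;> omega
        _ = n * (2 * (k + 1)) := by
            rw [Finset.sum_const, smul_eq_mul, Finset.card_univ, Fintype.card_fin]
    have b4 : (∑ j' : Fin m, if topAfter D (hv4 j') = some (hb j) then 2 else 0) ≤ 2 := by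
      calc (∑ j' : Fin m, if topAfter D (hv4 j') = some (hb j) then 2 else 0)
          ≤ ∑ j' : Fin m, (if j' = j then 2 else 0) := by
            refine Finset.sum_le_sum fun j' _ => ?_
            by_cases hjj : j' = j
            · subst hjj; rw [if_pos rfl]; split <;> omega
            · rw [if_neg hjj, top4]
              by_cases h' : j' ∈ B' <;> simp [h', hb, hwand, hjj]
        _ = 2 := by rw [Finset.sum_ite_eq' Finset.univ j (fun _ => 2)]; simp
    omega
  have hnorm : n * (2 * (k + 1)) = 2 * n * (k + 1) := by ring
  omega
end

section
/- In the X3C-to-Condorcet-CCAV construction, if S' ⊆ S is an exact cover of B by three-sets (|S'| = k and the sets in S' are pairwise disjoint with union B), then adding the k unregistered voters corresponding to S' makes p the Condorcet winner: for every b ∈ B the pairwise margin of p over b is exactly 1, and the pairwise margin of p over c is exactly 1. -/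
/-- Candidates for the X3C construction: `B = Fin (3k)` together with the
special candidates `c` and `p`. -/
abbrev XCand (k : ℕ) := Fin (3 * k) ⊕ Bool

/-- The distinguished candidate `p`. -/
def xp {k : ℕ} : XCand k := Sum.inr true

/-- The candidate `c`. -/
def xc {k : ℕ} : XCand k := Sum.inr false

/-- The candidate `b`. -/
def xb {k : ℕ} (b : Fin (3 * k)) : XCand k := Sum.inl b

/-- A voter with preference list `l` (most preferred first) prefers `a` to `b`
when `a` occurs earlier in `l`.  The pairwise margin of `a` over `b` is the
number of voters preferring `a` to `b` minus the number preferring `b` to `a`. -/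
def margin {C : Type*} [DecidableEq C] (votes : List (List C)) (a b : C) : ℤ :=
  ((votes.countP (fun l => decide (l.idxOf a < l.idxOf b))) : ℤ) -
    ((votes.countP (fun l => decide (l.idxOf b < l.idxOf a))) : ℤ)

/-- Registered vote `B > p > c`. -/
def reg1 (k : ℕ) : List (XCand k) := ((List.finRange (3 * k)).map xb) ++ [xp, xc]

/-- Registered vote `p > c > B`. -/
def reg2 (k : ℕ) : List (XCand k) := [xp, xc] ++ ((List.finRange (3 * k)).map xb)

/-- Unregistered vote for `S_i`: `S_i > c > p > B \ S_i`. -/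
noncomputable def unreg {k n : ℕ} (S : Fin n → Finset (Fin (3 * k))) (i : Fin n) :
    List (XCand k) :=
  ((S i).toList.map xb) ++ [xc, xp] ++
    ((((Finset.univ : Finset (Fin (3 * k))) \ S i).toList).map xb)

/-- The election after adding the unregistered voters indexed by `T`:
`k - 1` votes `B > p > c`, two votes `p > c > B`, and for each `i ∈ T` the vote
`S_i > c > p > B \ S_i`. -/
noncomputable def xVotes {k n : ℕ} (S : Fin n → Finset (Fin (3 * k)))
    (T : Finset (Fin n)) : List (List (XCand k)) :=
  List.replicate (k - 1) (reg1 k) ++ List.replicate 2 (reg2 k) ++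
    (T.toList.map (unreg S))

section Aux
variable {C : Type*} [DecidableEq C]

lemma margin_append (v w : List (List C)) (a b : C) :
    margin (v ++ w) a b = margin v a b + margin w a b := by
  simp [margin, List.countP_append]; ring

lemma margin_single (l : List C) (a b : C) :
    margin [l] a b = if l.idxOf a < l.idxOf b then 1
      else if l.idxOf b < l.idxOf a then -1 else 0 := by
  simp only [margin, List.countP_cons, List.countP_nil]
  by_cases h1 : l.idxOf a < l.idxOf b <;> by_cases h2 : l.idxOf b < l.idxOf a <;>
    simp [h1, h2]
  omega

lemma margin_replicate (m : ℕ) (l : List C) (a b : C) :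
    margin (List.replicate m l) a b = m * margin [l] a b := by
  induction m with
  | zero => simp [margin]
  | succ m ih =>
      rw [List.replicate_succ, show (l :: List.replicate m l) = [l] ++ List.replicate m l from rfl,
        margin_append, ih]
      push_cast; ring

lemma margin_map {ι : Type*} (L : List ι) (f : ι → List C) (a b : C) :
    margin (L.map f) a b = (L.map (fun i => margin [f i] a b)).sum := by
  induction L with
  | nil => simp [margin]
  | cons x t ih =>
      rw [List.map_cons, show (f x :: t.map f) = [f x] ++ t.map f from rfl, margin_append, ih]
      simp

lemma margin_reg1_b (L : List C) (a c x : C) (hx : x ∈ L) (ha : a ∉ L) :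
    margin [L ++ [a, c]] a x = -1 := by
  have h1 : (L ++ [a, c]).idxOf x < L.length := by
    rw [List.idxOf_append_of_mem hx]; exact List.idxOf_lt_length_iff.2 hx
  have h2 : (L ++ [a, c]).idxOf a = L.length := by
    rw [List.idxOf_append_of_notMem ha, List.idxOf_cons_self]; try omega
  rw [margin_single, h2, if_neg (by omega), if_pos (by omega)]

lemma margin_reg1_c (L : List C) (a c : C) (ha : a ∉ L) (hc : c ∉ L) (hac : c ≠ a) :
    margin [L ++ [a, c]] a c = 1 := by
  have h2 : (L ++ [a, c]).idxOf a = L.length := by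
    rw [List.idxOf_append_of_notMem ha, List.idxOf_cons_self]; try omega
  have h3 : (L ++ [a, c]).idxOf c = L.length + 1 := by
    rw [List.idxOf_append_of_notMem hc, List.idxOf_cons_ne _ hac.symm,
      List.idxOf_cons_self]
    try omega
  rw [margin_single, h2, h3, if_pos (by omega)]

lemma margin_head (L : List C) (a x : C) (h : a ≠ x) :
    margin [a :: L] a x = 1 := by
  have h1 : (a :: L).idxOf a = 0 := List.idxOf_cons_self
  have h2 : (a :: L).idxOf x = (L.idxOf x) + 1 := List.idxOf_cons_ne _ h
  rw [margin_single, h1, h2, if_pos (by omega)]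

lemma margin_unreg_c (F R : List C) (a c : C) (ha : a ∉ F) (hc : c ∉ F) (hac : a ≠ c) :
    margin [F ++ [c, a] ++ R] a c = -1 := by
  have hcm : c ∈ F ++ [c, a] := by simp
  have ham : a ∈ F ++ [c, a] := by simp
  have h2 : (F ++ [c, a] ++ R).idxOf a = F.length + 1 := by
    rw [List.idxOf_append_of_mem ham, List.idxOf_append_of_notMem ha,
      List.idxOf_cons_ne _ hac.symm, List.idxOf_cons_self]
    try omega
  have h3 : (F ++ [c, a] ++ R).idxOf c = F.length := by
    rw [List.idxOf_append_of_mem hcm, List.idxOf_append_of_notMem hc,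
      List.idxOf_cons_self]
    try omega
  rw [margin_single, h2, h3, if_neg (by omega), if_pos (by omega)]

lemma margin_unreg_mem (F R : List C) (a c x : C) (ha : a ∉ F) (hac : a ≠ c)
    (hx : x ∈ F) : margin [F ++ [c, a] ++ R] a x = -1 := by
  have ham : a ∈ F ++ [c, a] := by simp
  have h2 : (F ++ [c, a] ++ R).idxOf a = F.length + 1 := by
    rw [List.idxOf_append_of_mem ham, List.idxOf_append_of_notMem ha,
      List.idxOf_cons_ne _ hac.symm, List.idxOf_cons_self]
    try omega
  have h1 : (F ++ [c, a] ++ R).idxOf x < F.length := by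
    rw [List.idxOf_append_of_mem (List.mem_append_left _ hx), List.idxOf_append_of_mem hx]
    exact List.idxOf_lt_length_iff.2 hx
  rw [margin_single, h2, if_neg (by omega), if_pos (by omega)]

lemma margin_unreg_notmem (F R : List C) (a c x : C) (ha : a ∉ F) (hac : a ≠ c)
    (hx : x ∉ F) (hxc : x ≠ c) (hxa : x ≠ a) : margin [F ++ [c, a] ++ R] a x = 1 := by
  have ham : a ∈ F ++ [c, a] := by simp
  have h2 : (F ++ [c, a] ++ R).idxOf a = F.length + 1 := by
    rw [List.idxOf_append_of_mem ham, List.idxOf_append_of_notMem ha,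
      List.idxOf_cons_ne _ hac.symm, List.idxOf_cons_self]
    try omega
  have hxm : x ∉ F ++ [c, a] := by
    intro h
    rcases List.mem_append.1 h with h | h
    · exact hx h
    · simp only [List.mem_cons, List.not_mem_nil, or_false] at h
      rcases h with h | h
      exacts [hxc h, hxa h]
  have h1 : F.length + 1 < (F ++ [c, a] ++ R).idxOf x := by
    rw [List.idxOf_append_of_notMem hxm]
    simp only [List.length_append, List.length_cons, List.length_nil]
    omega
  rw [margin_single, h2, if_pos (by omega)]

end Aux


/-- In the X3C-to-Condorcet-CCAV construction, if `{S_i : i ∈ T}` is an exact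
cover of `B` by three-sets (`|T| = k`, pairwise disjoint sets with union `B`),
then adding the corresponding `k` unregistered voters makes `p` the Condorcet
winner: `p`'s pairwise margin over each `b ∈ B` is exactly `1`, and `p`'s
pairwise margin over `c` is exactly `1`. -/
theorem stmt14 {k n : ℕ} (hk : 3 ≤ k)
    (S : Fin n → Finset (Fin (3 * k))) (hS3 : ∀ i, (S i).card = 3)
    (T : Finset (Fin n)) (hT : T.card = k)
    (hdisj : ∀ i ∈ T, ∀ j ∈ T, i ≠ j → Disjoint (S i) (S j))
    (hcover : T.biUnion S = Finset.univ) :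
    (∀ b : Fin (3 * k), margin (xVotes S T) xp (xb b) = 1) ∧
    margin (xVotes S T) xp xc = 1 := by
  have hxpne : ∀ b : Fin (3 * k), (xp : XCand k) ≠ xb b := fun b => by simp [xp, xb]
  have hxcne : ∀ b : Fin (3 * k), (xc : XCand k) ≠ xb b := fun b => by simp [xc, xb]
  have hpc : (xp : XCand k) ≠ xc := by simp [xp, xc]
  have hp_notmem : ∀ (L : List (Fin (3 * k))), (xp : XCand k) ∉ L.map xb := by
    intro L h; rcases List.mem_map.1 h with ⟨y, -, hy⟩; exact hxpne y hy.symm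
  have hc_notmem : ∀ (L : List (Fin (3 * k))), (xc : XCand k) ∉ L.map xb := by
    intro L h; rcases List.mem_map.1 h with ⟨y, -, hy⟩; exact hxcne y hy.symm
  have hreg1b : ∀ b : Fin (3 * k), margin [reg1 k] xp (xb b) = -1 := by
    intro b
    exact margin_reg1_b _ _ _ _ (List.mem_map.2 ⟨b, List.mem_finRange b, rfl⟩) (hp_notmem _)
  have hreg1c : margin [reg1 k] xp xc = 1 :=
    margin_reg1_c _ _ _ (hp_notmem _) (hc_notmem _) hpc.symm
  have hreg2b : ∀ b : Fin (3 * k), margin [reg2 k] xp (xb b) = 1 := fun b =>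
    margin_head _ _ _ (hxpne b)
  have hreg2c : margin [reg2 k] xp xc = 1 := margin_head _ _ _ hpc
  have hunreg_c : ∀ i, margin [unreg S i] xp xc = -1 := fun i =>
    margin_unreg_c _ _ _ _ (hp_notmem _) (hc_notmem _) hpc
  have hunreg_b : ∀ i, ∀ b : Fin (3 * k),
      margin [unreg S i] xp (xb b) = if b ∈ S i then -1 else 1 := by
    intro i b
    by_cases hb : b ∈ S i
    · rw [if_pos hb]
      exact margin_unreg_mem _ _ _ _ _ (hp_notmem _) hpc
        (List.mem_map.2 ⟨b, by simpa using hb, rfl⟩)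
    · rw [if_neg hb]
      refine margin_unreg_notmem _ _ _ _ _ (hp_notmem _) hpc ?_ (hxcne b).symm (hxpne b).symm
      intro h
      rcases List.mem_map.1 h with ⟨y, hy, hxy⟩
      obtain rfl : y = b := by simpa [xb] using hxy
      exact hb (by simpa using hy)
  have hsum : ∀ g : Fin n → ℤ, (T.toList.map g).sum = ∑ i ∈ T, g i := by
    intro g
    rw [Finset.sum_eq_multiset_sum, ← Multiset.sum_coe, ← Multiset.map_coe, Finset.coe_toList]
  have hkcast : ((k - 1 : ℕ) : ℤ) = (k : ℤ) - 1 := by omega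
  constructor
  · intro b
    obtain ⟨i₀, hi₀T, hi₀⟩ : ∃ i ∈ T, b ∈ S i := by
      have : b ∈ T.biUnion S := hcover ▸ Finset.mem_univ b
      simpa using this
    have hnot : ∀ j ∈ T.erase i₀, b ∉ S j := by
      intro j hj hbj
      have hjT := Finset.mem_of_mem_erase hj
      have hne : j ≠ i₀ := Finset.ne_of_mem_erase hj
      simpa using (hdisj j hjT i₀ hi₀T hne).le_bot (Finset.mem_inter.2 ⟨hbj, hi₀⟩)
    have hsumb : ∑ i ∈ T, (if b ∈ S i then (-1 : ℤ) else 1) = (k : ℤ) - 2 := by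
      rw [← Finset.add_sum_erase T _ hi₀T, if_pos hi₀,
        Finset.sum_congr rfl (fun j hj => if_neg (hnot j hj)), Finset.sum_const,
        Finset.card_erase_of_mem hi₀T, hT]
      simp only [nsmul_eq_mul]
      push_cast
      omega
    rw [xVotes, margin_append, margin_append, margin_replicate, margin_replicate,
      margin_map]
    rw [hreg1b, hreg2b, show (fun i => margin [unreg S i] xp (xb b))
      = (fun i => if b ∈ S i then (-1 : ℤ) else 1) from funext fun i => hunreg_b i b,
      hsum, hsumb, hkcast]
    ring
  · rw [xVotes, margin_append, margin_append, margin_replicate, margin_replicate,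
      margin_map]
    rw [hreg1c, hreg2c, show (fun i => margin [unreg S i] xp xc)
      = (fun _ => (-1 : ℤ)) from funext fun i => hunreg_c i,
      hsum]
    simp only [hT, Finset.sum_const, smul_eq_mul, hkcast]
    ring
end

section
/- In the Hitting-Set-to-Condorcet-CCUDV construction, if B' ⊆ B is a hitting set with |B'| = k, then deleting the m − k voters {y_j : b_j ∉ B'} makes p the Condorcet winner: p's pairwise margin over each candidate d_i and over e equals 1, and p's pairwise margin over each S_i is at least 1. -/
/-- Candidates for the Hitting-Set-to-Condorcet-CCUDV construction: `p` (coded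
as `none`), the `n` set-candidates `S_1,…,S_n`, the `k+1` candidates
`d_1,…,d_{k+1}`, and `e`. -/
abbrev KCand (n k : ℕ) := Option (Fin n ⊕ (Fin (k + 1) ⊕ Unit))

/-- The distinguished candidate `p`. -/
def kp {n k : ℕ} : KCand n k := none

/-- The set-candidate `S_i`. -/
def ks {n k : ℕ} (i : Fin n) : KCand n k := some (Sum.inl i)

/-- The candidate `d_i`. -/
def kd {n k : ℕ} (i : Fin (k + 1)) : KCand n k := some (Sum.inr (Sum.inl i))

/-- The candidate `e`. -/
def ke {n k : ℕ} : KCand n k := some (Sum.inr (Sum.inr ()))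

/-- The voter `x_i` (with `x_1` corresponding to `i = 0`):
`x_1` has order `S_1,…,S_n > d_2,…,d_{k+1} > p > d_1 > e`; for `i ≠ 0`, `x_i`
has order `D \ {d_i} > p > d_i > e > S_1,…,S_n`. -/
def xvote (n k : ℕ) (i : Fin (k + 1)) : List (KCand n k) :=
  if i = 0 then
    ((List.finRange n).map ks) ++
      (((List.finRange (k + 1)).filter (fun t => decide (t ≠ 0))).map kd) ++
      [kp, kd 0, ke]
  else
    (((List.finRange (k + 1)).filter (fun t => decide (t ≠ i))).map kd) ++
      [kp, kd i, ke] ++ ((List.finRange n).map ks)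

/-- The voter `y_j`: order
`(S-candidates not containing b_j) > e > p > d_1,…,d_{k+1} >
(S-candidates containing b_j)`. -/
def yvote (n k : ℕ) {m : ℕ} (S : Fin n → Finset (Fin m)) (j : Fin m) :
    List (KCand n k) :=
  (((List.finRange n).filter (fun i => decide (j ∉ S i))).map ks) ++
    [ke, kp] ++ ((List.finRange (k + 1)).map kd) ++
    (((List.finRange n).filter (fun i => decide (j ∈ S i))).map ks)

section helpers
variable {α : Type*} [DecidableEq α]

lemma idx_lt_of_mem_left {l1 l2 : List α} {a b : α} (ha : a ∈ l1) (hb : b ∉ l1) :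
    (l1 ++ l2).idxOf a < (l1 ++ l2).idxOf b := by
  rw [List.idxOf_append_of_mem ha, List.idxOf_append_of_notMem hb]
  calc l1.idxOf a < l1.length := List.idxOf_lt_length_iff.2 ha
    _ ≤ _ := Nat.le_add_right _ _

lemma idx_lt_append_iff {l1 l2 : List α} {a b : α} (ha : a ∉ l1) (hb : b ∉ l1) :
    ((l1 ++ l2).idxOf a < (l1 ++ l2).idxOf b ↔ l2.idxOf a < l2.idxOf b) := by
  rw [List.idxOf_append_of_notMem ha, List.idxOf_append_of_notMem hb]
  omega

lemma idx_lt_append_false {l1 l2 : List α} {a b : α} (ha : a ∉ l1) (hb : b ∈ l1) :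
    ((l1 ++ l2).idxOf a < (l1 ++ l2).idxOf b) ↔ False :=
  iff_false_intro (Nat.lt_asymm (idx_lt_of_mem_left hb ha))

lemma idx_lt_append_true {l1 l2 : List α} {a b : α} (ha : a ∈ l1) (hb : b ∉ l1) :
    ((l1 ++ l2).idxOf a < (l1 ++ l2).idxOf b) ↔ True :=
  iff_true_intro (idx_lt_of_mem_left ha hb)

lemma indexOf_head_lt {a b : α} (l : List α) (h : a ≠ b) :
    (a :: l).idxOf a < (a :: l).idxOf b := by
  rw [List.idxOf_cons_self, List.idxOf_cons_ne _ h]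
  exact Nat.succ_pos _

lemma indexOf_second_lt {a b c : α} (l : List α) (hca : c ≠ a) (hab : a ≠ b) (hcb : c ≠ b) :
    (c :: a :: l).idxOf a < (c :: a :: l).idxOf b := by
  rw [List.idxOf_cons_ne _ hca, List.idxOf_cons_self,
    List.idxOf_cons_ne _ hcb, List.idxOf_cons_ne _ hab]
  omega

end helpers

section mems
variable {n k : ℕ}

@[simp] lemma kp_not_mem_ks (l : List (Fin n)) : (kp : KCand n k) ∉ l.map ks := by
  simp [kp, ks]
@[simp] lemma kp_not_mem_kd (l : List (Fin (k+1))) : (kp : KCand n k) ∉ l.map kd := by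
  simp [kp, kd]
@[simp] lemma ke_not_mem_ks (l : List (Fin n)) : (ke : KCand n k) ∉ l.map ks := by
  simp [ke, ks]
@[simp] lemma ke_not_mem_kd (l : List (Fin (k+1))) : (ke : KCand n k) ∉ l.map kd := by
  simp [ke, kd]
@[simp] lemma kd_not_mem_ks (t : Fin (k+1)) (l : List (Fin n)) : (kd t : KCand n k) ∉ l.map ks := by
  simp [kd, ks]
@[simp] lemma ks_not_mem_kd (i : Fin n) (l : List (Fin (k+1))) : (ks i : KCand n k) ∉ l.map kd := by
  simp [kd, ks]
@[simp] lemma kd_mem_kd {t : Fin (k+1)} {l : List (Fin (k+1))} :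
    (kd t : KCand n k) ∈ l.map kd ↔ t ∈ l := by
  simp [kd]
@[simp] lemma ks_mem_ks {i : Fin n} {l : List (Fin n)} :
    (ks i : KCand n k) ∈ l.map ks ↔ i ∈ l := by
  simp [ks]
@[simp] lemma kp_ne_kd (t : Fin (k+1)) : (kp : KCand n k) ≠ kd t := by simp [kp, kd]
@[simp] lemma kd_ne_kp (t : Fin (k+1)) : (kd t : KCand n k) ≠ kp := by simp [kp, kd]
@[simp] lemma kp_ne_ke : (kp : KCand n k) ≠ ke := by simp [kp, ke]
@[simp] lemma ke_ne_kp : (ke : KCand n k) ≠ kp := by simp [kp, ke]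
@[simp] lemma kd_ne_ke (t : Fin (k+1)) : (kd t : KCand n k) ≠ ke := by simp [ke, kd]
@[simp] lemma ke_ne_kd (t : Fin (k+1)) : (ke : KCand n k) ≠ kd t := by simp [ke, kd]
@[simp] lemma kp_ne_ks (i : Fin n) : (kp : KCand n k) ≠ ks i := by simp [kp, ks]
@[simp] lemma ks_ne_kp (i : Fin n) : (ks i : KCand n k) ≠ kp := by simp [kp, ks]
@[simp] lemma ke_ne_ks (i : Fin n) : (ke : KCand n k) ≠ ks i := by simp [ke, ks]
@[simp] lemma ks_ne_ke (i : Fin n) : (ks i : KCand n k) ≠ ke := by simp [ke, ks]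
@[simp] lemma ks_eq_ks {a b : Fin n} : (ks a : KCand n k) = ks b ↔ a = b := by simp [ks]
@[simp] lemma kd_eq_kd {t s : Fin (k+1)} : (kd t : KCand n k) = kd s ↔ t = s := by simp [kd]
end mems


/-- `indexOf` with the `BEq` instance coming from a given `DecidableEq` instance,
matching the way `margin` elaborates. -/
def kindexOf {n k : ℕ} (inst : DecidableEq (KCand n k)) (l : List (KCand n k))
    (a : KCand n k) : ℕ :=
  @List.idxOf _ (@instBEqOfDecidableEq _ inst) a l

section xlem
variable {n k : ℕ} {inst : DecidableEq (KCand n k)}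

lemma x_pd (i t : Fin (k+1)) :
    (kindexOf inst (xvote n k i) kp < kindexOf inst (xvote n k i) (kd t)) ↔ i = t := by
  unfold kindexOf xvote
  by_cases hi : i = 0
  · rw [if_pos hi]
    simp only [List.append_assoc]
    subst hi
    by_cases ht : t = 0
    · subst ht
      rw [idx_lt_append_iff (kp_not_mem_ks _) (kd_not_mem_ks _ _),
        idx_lt_append_iff (kp_not_mem_kd _)
          (show (kd (0 : Fin (k+1)) : KCand n k) ∉
            (((List.finRange (k + 1)).filter (fun t => decide (t ≠ 0))).map kd) by simp)]
      exact iff_of_true (indexOf_head_lt _ (kp_ne_kd 0)) rfl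
    · rw [idx_lt_append_iff (kp_not_mem_ks _) (kd_not_mem_ks _ _),
        idx_lt_append_false (kp_not_mem_kd _)
          (show (kd t : KCand n k) ∈
            (((List.finRange (k + 1)).filter (fun t => decide (t ≠ 0))).map kd) by simp [ht])]
      exact iff_of_false id fun h => ht h.symm
  · rw [if_neg hi]
    simp only [List.append_assoc]
    by_cases ht : t = i
    · subst ht
      rw [idx_lt_append_iff (kp_not_mem_kd _)
          (show (kd t : KCand n k) ∉
            (((List.finRange (k + 1)).filter (fun s => decide (s ≠ t))).map kd) by simp)]
      simp only [List.cons_append, List.nil_append]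
      exact iff_of_true (indexOf_head_lt _ (kp_ne_kd t)) trivial
    · rw [idx_lt_append_false (kp_not_mem_kd _)
          (show (kd t : KCand n k) ∈
            (((List.finRange (k + 1)).filter (fun s => decide (s ≠ i))).map kd) by simp [ht])]
      exact iff_of_false id fun h => ht h.symm

lemma x_dp (i t : Fin (k+1)) :
    (kindexOf inst (xvote n k i) (kd t) < kindexOf inst (xvote n k i) kp) ↔ i ≠ t := by
  unfold kindexOf xvote
  by_cases hi : i = 0
  · rw [if_pos hi]
    simp only [List.append_assoc]
    subst hi
    by_cases ht : t = 0
    · subst ht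
      rw [idx_lt_append_iff (kd_not_mem_ks _ _) (kp_not_mem_ks _),
        idx_lt_append_iff
          (show (kd (0 : Fin (k+1)) : KCand n k) ∉
            (((List.finRange (k + 1)).filter (fun t => decide (t ≠ 0))).map kd) by simp)
          (kp_not_mem_kd _)]
      exact iff_of_false (Nat.lt_asymm (indexOf_head_lt _ (kp_ne_kd 0))) (by simp)
    · rw [idx_lt_append_iff (kd_not_mem_ks _ _) (kp_not_mem_ks _),
        idx_lt_append_true
          (show (kd t : KCand n k) ∈
            (((List.finRange (k + 1)).filter (fun t => decide (t ≠ 0))).map kd) by simp [ht])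
          (kp_not_mem_kd _)]
      exact iff_of_true trivial (Ne.symm ht)
  · rw [if_neg hi]
    simp only [List.append_assoc]
    by_cases ht : t = i
    · subst ht
      rw [idx_lt_append_iff
          (show (kd t : KCand n k) ∉
            (((List.finRange (k + 1)).filter (fun s => decide (s ≠ t))).map kd) by simp)
          (kp_not_mem_kd _)]
      simp only [List.cons_append, List.nil_append]
      exact iff_of_false (Nat.lt_asymm (indexOf_head_lt _ (kp_ne_kd t))) (by simp)
    · rw [idx_lt_append_true
          (show (kd t : KCand n k) ∈
            (((List.finRange (k + 1)).filter (fun s => decide (s ≠ i))).map kd) by simp [ht])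
          (kp_not_mem_kd _)]
      exact iff_of_true trivial (Ne.symm ht)

lemma x_pe (i : Fin (k+1)) :
    kindexOf inst (xvote n k i) kp < kindexOf inst (xvote n k i) ke := by
  unfold kindexOf xvote
  by_cases hi : i = 0
  · rw [if_pos hi]
    simp only [List.append_assoc]
    rw [idx_lt_append_iff (kp_not_mem_ks _) (ke_not_mem_ks _),
      idx_lt_append_iff (kp_not_mem_kd _) (ke_not_mem_kd _)]
    exact indexOf_head_lt _ kp_ne_ke
  · rw [if_neg hi]
    simp only [List.append_assoc]
    rw [idx_lt_append_iff (kp_not_mem_kd _) (ke_not_mem_kd _)]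
    simp only [List.cons_append, List.nil_append]
    exact indexOf_head_lt _ kp_ne_ke

lemma x_ps (i : Fin (k+1)) (j : Fin n) :
    (kindexOf inst (xvote n k i) kp < kindexOf inst (xvote n k i) (ks j)) ↔ i ≠ 0 := by
  unfold kindexOf xvote
  by_cases hi : i = 0
  · rw [if_pos hi]
    simp only [List.append_assoc]
    rw [idx_lt_append_false (kp_not_mem_ks _) (by simp : (ks j : KCand n k) ∈ _)]
    exact iff_of_false id (by simp [hi])
  · rw [if_neg hi]
    simp only [List.append_assoc]
    rw [idx_lt_append_iff (kp_not_mem_kd _) (ks_not_mem_kd _ _)]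
    simp only [List.cons_append, List.nil_append]
    exact iff_of_true (indexOf_head_lt _ (kp_ne_ks j)) hi

lemma x_sp (i : Fin (k+1)) (j : Fin n) :
    (kindexOf inst (xvote n k i) (ks j) < kindexOf inst (xvote n k i) kp) ↔ i = 0 := by
  unfold kindexOf xvote
  by_cases hi : i = 0
  · rw [if_pos hi]
    simp only [List.append_assoc]
    rw [idx_lt_append_true (by simp : (ks j : KCand n k) ∈ _) (kp_not_mem_ks _)]
    exact iff_of_true trivial hi
  · rw [if_neg hi]
    simp only [List.append_assoc]
    rw [idx_lt_append_iff (ks_not_mem_kd _ _) (kp_not_mem_kd _)]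
    simp only [List.cons_append, List.nil_append]
    exact iff_of_false (Nat.lt_asymm (indexOf_head_lt _ (kp_ne_ks j))) hi

end xlem

section ylem
variable {n k m : ℕ} {inst : DecidableEq (KCand n k)}
  (S : Fin n → Finset (Fin m)) (j : Fin m)

lemma y_pd (t : Fin (k+1)) :
    kindexOf inst (yvote n k S j) kp < kindexOf inst (yvote n k S j) (kd t) := by
  unfold kindexOf yvote
  simp only [List.append_assoc]
  rw [idx_lt_append_iff (kp_not_mem_ks _) (kd_not_mem_ks _ _)]
  simp only [List.cons_append, List.nil_append]
  exact indexOf_second_lt _ ke_ne_kp (kp_ne_kd t) (ke_ne_kd t)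

lemma y_ep : kindexOf inst (yvote n k S j) ke < kindexOf inst (yvote n k S j) kp := by
  unfold kindexOf yvote
  simp only [List.append_assoc]
  rw [idx_lt_append_iff (ke_not_mem_ks _) (kp_not_mem_ks _)]
  simp only [List.cons_append, List.nil_append]
  exact indexOf_head_lt _ ke_ne_kp

lemma y_ps (i : Fin n) :
    (kindexOf inst (yvote n k S j) kp < kindexOf inst (yvote n k S j) (ks i)) ↔ j ∈ S i := by
  unfold kindexOf yvote
  simp only [List.append_assoc]
  by_cases hj : j ∈ S i
  · rw [idx_lt_append_iff (kp_not_mem_ks _)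
      (show (ks i : KCand n k) ∉
        (((List.finRange n).filter (fun i' => decide (j ∉ S i'))).map ks) by simp [hj])]
    simp only [List.cons_append, List.nil_append]
    exact iff_of_true (indexOf_second_lt _ ke_ne_kp (kp_ne_ks i) (ke_ne_ks i)) hj
  · rw [idx_lt_append_false (kp_not_mem_ks _)
      (show (ks i : KCand n k) ∈
        (((List.finRange n).filter (fun i' => decide (j ∉ S i'))).map ks) by simp [hj])]
    exact iff_of_false id hj

lemma y_sp (i : Fin n) :
    (kindexOf inst (yvote n k S j) (ks i) < kindexOf inst (yvote n k S j) kp) ↔ j ∉ S i := by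
  unfold kindexOf yvote
  simp only [List.append_assoc]
  by_cases hj : j ∈ S i
  · rw [idx_lt_append_iff
      (show (ks i : KCand n k) ∉
        (((List.finRange n).filter (fun i' => decide (j ∉ S i'))).map ks) by simp [hj])
      (kp_not_mem_ks _)]
    simp only [List.cons_append, List.nil_append]
    exact iff_of_false
      (Nat.lt_asymm (indexOf_second_lt _ ke_ne_kp (kp_ne_ks i) (ke_ne_ks i)))
      (by simp [hj])
  · rw [idx_lt_append_true
      (show (ks i : KCand n k) ∈
        (((List.finRange n).filter (fun i' => decide (j ∉ S i'))).map ks) by simp [hj])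
      (kp_not_mem_ks _)]
    exact iff_of_true trivial hj

end ylem

section counting
variable {k : ℕ}

lemma countP_finRange_of_eq (t : Fin (k+1)) (p : Fin (k+1) → Bool)
    (h : ∀ i, p i = true ↔ i = t) : (List.finRange (k+1)).countP p = 1 := by
  have h1 : (List.finRange (k+1)).countP p = (List.finRange (k+1)).count t := by
    rw [List.count_eq_countP]
    exact List.countP_congr fun x _ => by simp [h x]
  rw [h1]
  exact List.count_eq_one_of_mem (List.nodup_finRange _) (List.mem_finRange t)

lemma countP_finRange_of_ne (t : Fin (k+1)) (p : Fin (k+1) → Bool)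
    (h : ∀ i, p i = true ↔ i ≠ t) : (List.finRange (k+1)).countP p = k := by
  have h2 : (List.finRange (k+1)).countP (fun i => decide ¬ p i) = 1 := by
    refine countP_finRange_of_eq t _ fun i => ?_
    rcases hp : p i with _ | _
    · simp only [decide_eq_true_eq, hp]
      constructor
      · intro _
        by_contra hne
        rw [(h i).mpr hne] at hp
        cases hp
      · intro _
        simp
    · have := (h i).mp hp
      simp [this, hp]
  have h3 := List.length_eq_countP_add_countP (p := p) (l := List.finRange (k+1))
  rw [List.length_finRange] at h3
  omega

variable {n m : ℕ}

lemma xcount_eq (t : Fin (k+1)) (p : List (KCand n k) → Bool)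
    (h : ∀ i, p (xvote n k i) = true ↔ i = t) :
    (List.finRange (k+1)).countP (p ∘ xvote n k) = 1 :=
  countP_finRange_of_eq t _ fun i => by simpa using h i

lemma xcount_ne (t : Fin (k+1)) (p : List (KCand n k) → Bool)
    (h : ∀ i, p (xvote n k i) = true ↔ i ≠ t) :
    (List.finRange (k+1)).countP (p ∘ xvote n k) = k :=
  countP_finRange_of_ne t _ fun i => by simpa using h i

lemma xcount_all (p : List (KCand n k) → Bool)
    (h : ∀ i, p (xvote n k i) = true) :
    (List.finRange (k+1)).countP (p ∘ xvote n k) = k + 1 := by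
  have h2 : ∀ i ∈ List.finRange (k+1), (p ∘ xvote n k) i = true := fun i _ => h i
  rw [List.countP_eq_length.mpr h2, List.length_finRange]

lemma xcount_zero (p : List (KCand n k) → Bool)
    (h : ∀ i, ¬ p (xvote n k i) = true) :
    (List.finRange (k+1)).countP (p ∘ xvote n k) = 0 :=
  List.countP_eq_zero.mpr fun i _ => h i

lemma ycount_all (S : Fin n → Finset (Fin m)) (B' : Finset (Fin m))
    (p : List (KCand n k) → Bool) (h : ∀ j, p (yvote n k S j) = true) :
    B'.toList.countP (p ∘ yvote n k S) = B'.card := by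
  have h2 : ∀ j ∈ B'.toList, (p ∘ yvote n k S) j = true := fun j _ => h j
  rw [List.countP_eq_length.mpr h2, Finset.length_toList]

lemma ycount_zero (S : Fin n → Finset (Fin m)) (B' : Finset (Fin m))
    (p : List (KCand n k) → Bool) (h : ∀ j, ¬ p (yvote n k S j) = true) :
    B'.toList.countP (p ∘ yvote n k S) = 0 :=
  List.countP_eq_zero.mpr fun j _ => h j

lemma ycount_filter (S : Fin n → Finset (Fin m)) (B' : Finset (Fin m))
    (q : Fin m → Prop) [DecidablePred q] (p : List (KCand n k) → Bool)
    (h : ∀ j, p (yvote n k S j) = true ↔ q j) :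
    B'.toList.countP (p ∘ yvote n k S) = (B'.filter q).card := by
  have h1 : B'.toList.countP (p ∘ yvote n k S) =
      B'.toList.countP (fun j => decide (q j)) :=
    List.countP_congr fun x _ => by simp [h x]
  rw [h1, ← Multiset.coe_countP, Finset.toList, Multiset.coe_toList,
    Multiset.countP_eq_card_filter, Finset.card_def, Finset.filter_val]

end counting

/-- In the Hitting-Set-to-Condorcet-CCUDV construction, if `B'` is a hitting set
with `|B'| = k`, then deleting the `m - k` voters `{y_j : b_j ∉ B'}` (keeping
all `x_i` and the voters `y_j` with `j ∈ B'`) makes `p` the Condorcet winner: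
`p`'s pairwise margin over each `d_i` and over `e` equals `1`, and `p`'s
pairwise margin over each set-candidate `S_i` is at least `1`. -/
theorem stmt16 {n m : ℕ} (k : ℕ) (hk : 0 < k) (hkm : k ≤ m)
    (S : Fin n → Finset (Fin m))
    (B' : Finset (Fin m)) (hhit : ∀ i, ∃ j ∈ B', j ∈ S i) (hcard : B'.card = k)
    (votes : List (List (KCand n k)))
    (hv : votes = ((List.finRange (k + 1)).map (xvote n k)) ++
      (B'.toList.map (yvote n k S))) :
    (∀ i : Fin (k + 1), margin votes kp (kd i) = 1) ∧
    margin votes kp ke = 1 ∧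
    (∀ i : Fin n, 1 ≤ margin votes kp (ks i)) := by
  subst hv
  refine ⟨fun t => ?_, ?_, fun i => ?_⟩
  · unfold margin
    simp only [List.countP_append, List.countP_map]
    rw [xcount_eq t, xcount_ne t, ycount_all S B', ycount_zero S B', hcard]
    · push_cast
      ring
    · intro j
      simp only [decide_eq_true_eq, not_lt]
      exact Nat.le_of_lt (y_pd S j t)
    · intro j
      simp only [decide_eq_true_eq]
      exact y_pd S j t
    · intro i
      simp only [decide_eq_true_eq]
      exact x_dp i t
    · intro i
      simp only [decide_eq_true_eq]
      exact x_pd i t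
  · unfold margin
    simp only [List.countP_append, List.countP_map]
    rw [xcount_all, xcount_zero, ycount_zero S B', ycount_all S B', hcard]
    · push_cast
      ring
    · intro j
      simp only [decide_eq_true_eq]
      exact y_ep S j
    · intro j
      simp only [decide_eq_true_eq, not_lt]
      exact Nat.le_of_lt (y_ep S j)
    · intro i
      simp only [decide_eq_true_eq, not_lt]
      exact Nat.le_of_lt (x_pe i)
    · intro i
      simp only [decide_eq_true_eq]
      exact x_pe i
  · unfold margin
    simp only [List.countP_append, List.countP_map]
    rw [xcount_ne 0, xcount_eq 0,
      ycount_filter S B' (fun j => j ∈ S i),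
      ycount_filter S B' (fun j => j ∉ S i)]
    · have h1 := Finset.card_filter_add_card_filter_not
        (s := B') (p := fun j => j ∈ S i)
      obtain ⟨j, hjB, hjS⟩ := hhit i
      have h2 : 0 < (B'.filter (fun j => j ∈ S i)).card :=
        Finset.card_pos.mpr ⟨j, Finset.mem_filter.mpr ⟨hjB, hjS⟩⟩
      rw [hcard] at h1
      push_cast
      omega
    · intro j
      simp only [decide_eq_true_eq]
      exact y_sp S j i
    · intro j
      simp only [decide_eq_true_eq]
      exact y_ps S j i
    · intro i'
      simp only [decide_eq_true_eq]
      exact x_sp i' i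
    · intro i'
      simp only [decide_eq_true_eq]
      exact x_ps i' i
end

section
/- In the Hitting-Set-to-Condorcet-CCUDV construction, if V' is any set of voters whose deletion makes p the Condorcet winner, then V' contains no voter x_i, exactly k of the voters y_j are retained, and the retained indices {b_j : y_j ∉ V'} form a hitting set of S of size k. -/
variable {α : Type*} [BEq α] [LawfulBEq α]

lemma gidx_append_mem {a : α} {l₁ : List α} (l₂ : List α) (h : a ∈ l₁) :
    (l₁ ++ l₂).idxOf a = l₁.idxOf a := by
  induction l₁ with
  | nil => simp at h
  | cons x xs ih =>
    by_cases hx : x == a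
    · simp [List.idxOf_cons, hx]
    · have : a ∈ xs := by
        rcases List.mem_cons.1 h with h' | h'
        · exact absurd (by simp [h']) hx
        · exact h'
      simp [List.idxOf_cons, hx, ih this]

lemma gidx_append_not_mem {a : α} {l₁ : List α} (l₂ : List α) (h : a ∉ l₁) :
    (l₁ ++ l₂).idxOf a = l₁.length + l₂.idxOf a := by
  induction l₁ with
  | nil => simp
  | cons x xs ih =>
    have hx : ¬ (x == a) := by simp at h ⊢; intro h'; exact h.1 h'.symm
    simp [List.idxOf_cons, hx, ih (fun h' => h (List.mem_cons_of_mem _ h'))]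
    omega

lemma gidx_lt_length {a : α} {l : List α} (h : a ∈ l) : l.idxOf a < l.length := by
  induction l with
  | nil => simp at h
  | cons x xs ih =>
    by_cases hx : x == a
    · simp [List.idxOf_cons, hx]
    · have : a ∈ xs := by
        rcases List.mem_cons.1 h with h' | h'
        · exact absurd (by simp [h']) hx
        · exact h'
      simpa [List.idxOf_cons, hx] using Nat.succ_lt_succ (ih this)

lemma before_of {l₁ : List α} (l₂ : List α) {a b : α} (ha : a ∈ l₁) (hb : b ∉ l₁) :
    (l₁ ++ l₂).idxOf a < (l₁ ++ l₂).idxOf b := by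
  rw [gidx_append_mem _ ha, gidx_append_not_mem _ hb]
  exact lt_of_lt_of_le (gidx_lt_length ha) (Nat.le_add_right _ _)

lemma countP_toList {β : Type*} [DecidableEq β] (s : Finset β) (p : β → Bool) :
    s.toList.countP p = (s.filter (fun x => p x)).card := by
  have h1 : s.toList.countP p = s.toList.countP (fun b => decide (p b = true)) := by simp
  rw [h1, ← Multiset.coe_countP, Finset.coe_toList, Multiset.countP_eq_card_filter]
  rfl

lemma countP_votes {n m : ℕ} (k : ℕ) (S : Fin n → Finset (Fin m))
    (V' : Finset (Fin (k + 1) ⊕ Fin m)) (p : List (KCand n k) → Bool) :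
    (((Finset.univ \ V').toList.map (Sum.elim (xvote n k) (yvote n k S))).countP p)
      = (Finset.univ.filter (fun i : Fin (k + 1) =>
            Sum.inl i ∉ V' ∧ p (xvote n k i))).card
        + (Finset.univ.filter (fun j : Fin m =>
            Sum.inr j ∉ V' ∧ p (yvote n k S j))).card := by
  classical
  rw [List.countP_map, countP_toList, Finset.sdiff_eq_filter,
      Finset.card_filter, Finset.sum_filter, Fintype.sum_sum_type,
      Finset.card_filter, Finset.card_filter]
  congr 1
  · apply Finset.sum_congr rfl; intro x _; simp [Function.comp, ite_and]; congr
  · apply Finset.sum_congr rfl; intro x _; simp [Function.comp, ite_and]; congr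

section Votes

variable {n k m : ℕ} [BEq (KCand n k)] [LawfulBEq (KCand n k)]

lemma X1 (i : Fin (k + 1)) :
    (xvote n k i).idxOf kp < (xvote n k i).idxOf (kd i) := by
  unfold xvote
  split
  · next h =>
    subst h
    rw [show ((List.finRange n).map ks ++
        (((List.finRange (k + 1)).filter (fun t => decide (t ≠ 0))).map kd) ++
        [kp, kd 0, ke] : List (KCand n k)) =
        ((List.finRange n).map ks ++
        (((List.finRange (k + 1)).filter (fun t => decide (t ≠ 0))).map kd) ++
        [kp]) ++ [kd 0, ke] by simp]
    apply before_of <;> simp [kp, kd, ks, ke]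
  · next h =>
    rw [show ((((List.finRange (k + 1)).filter (fun t => decide (t ≠ i))).map kd) ++
        [kp, kd i, ke] ++ ((List.finRange n).map ks) : List (KCand n k)) =
        ((((List.finRange (k + 1)).filter (fun t => decide (t ≠ i))).map kd) ++ [kp]) ++
        ([kd i, ke] ++ (List.finRange n).map ks) by simp]
    apply before_of <;> simp [kp, kd, ks, ke]

lemma X2 (i t : Fin (k + 1)) (h : t ≠ i) :
    (xvote n k i).idxOf (kd t) < (xvote n k i).idxOf kp := by
  unfold xvote
  split
  · next hi =>
    subst hi
    rw [show ((List.finRange n).map ks ++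
        (((List.finRange (k + 1)).filter (fun t => decide (t ≠ 0))).map kd) ++
        [kp, kd 0, ke] : List (KCand n k)) =
        ((List.finRange n).map ks ++
        (((List.finRange (k + 1)).filter (fun t => decide (t ≠ 0))).map kd)) ++
        [kp, kd 0, ke] by simp]
    apply before_of <;> simp [kp, kd, ks, ke, h]
  · next hi =>
    rw [show ((((List.finRange (k + 1)).filter (fun t => decide (t ≠ i))).map kd) ++
        [kp, kd i, ke] ++ ((List.finRange n).map ks) : List (KCand n k)) =
        (((List.finRange (k + 1)).filter (fun t => decide (t ≠ i))).map kd) ++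
        ([kp, kd i, ke] ++ (List.finRange n).map ks) by simp]
    apply before_of <;> simp [kp, kd, ks, ke, h]

lemma X3 (i : Fin (k + 1)) :
    (xvote n k i).idxOf kp < (xvote n k i).idxOf ke := by
  unfold xvote
  split
  · rw [show ((List.finRange n).map ks ++
        (((List.finRange (k + 1)).filter (fun t => decide (t ≠ 0))).map kd) ++
        [kp, kd 0, ke] : List (KCand n k)) =
        ((List.finRange n).map ks ++
        (((List.finRange (k + 1)).filter (fun t => decide (t ≠ 0))).map kd) ++
        [kp, kd 0]) ++ [ke] by simp]
    apply before_of <;> simp [kp, kd, ks, ke]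
  · rw [show ((((List.finRange (k + 1)).filter (fun t => decide (t ≠ i))).map kd) ++
        [kp, kd i, ke] ++ ((List.finRange n).map ks) : List (KCand n k)) =
        ((((List.finRange (k + 1)).filter (fun t => decide (t ≠ i))).map kd) ++ [kp, kd i]) ++
        ([ke] ++ (List.finRange n).map ks) by simp]
    apply before_of <;> simp [kp, kd, ks, ke]

lemma X4 (i : Fin (k + 1)) (h : i ≠ 0) (s : Fin n) :
    (xvote n k i).idxOf kp < (xvote n k i).idxOf (ks s) := by
  unfold xvote
  rw [if_neg h]
  rw [show ((((List.finRange (k + 1)).filter (fun t => decide (t ≠ i))).map kd) ++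
      [kp, kd i, ke] ++ ((List.finRange n).map ks) : List (KCand n k)) =
      ((((List.finRange (k + 1)).filter (fun t => decide (t ≠ i))).map kd) ++ [kp, kd i, ke]) ++
      ((List.finRange n).map ks) by simp]
  apply before_of <;> simp [kp, kd, ks, ke]

lemma X5 (s : Fin n) :
    (xvote n k 0).idxOf (ks s) < (xvote n k 0).idxOf kp := by
  unfold xvote
  rw [if_pos rfl]
  rw [show ((List.finRange n).map ks ++
      (((List.finRange (k + 1)).filter (fun t => decide (t ≠ 0))).map kd) ++
      [kp, kd 0, ke] : List (KCand n k)) =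
      ((List.finRange n).map ks) ++
      ((((List.finRange (k + 1)).filter (fun t => decide (t ≠ 0))).map kd) ++
      [kp, kd 0, ke]) by simp]
  apply before_of <;> simp [kp, kd, ks, ke]

variable (S : Fin n → Finset (Fin m))

lemma Y1 (j : Fin m) (t : Fin (k + 1)) :
    (yvote n k S j).idxOf kp < (yvote n k S j).idxOf (kd t) := by
  unfold yvote
  rw [show ((((List.finRange n).filter (fun i => decide (j ∉ S i))).map ks) ++
      [ke, kp] ++ ((List.finRange (k + 1)).map kd) ++
      (((List.finRange n).filter (fun i => decide (j ∈ S i))).map ks) : List (KCand n k)) =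
      ((((List.finRange n).filter (fun i => decide (j ∉ S i))).map ks) ++ [ke, kp]) ++
      (((List.finRange (k + 1)).map kd) ++
      (((List.finRange n).filter (fun i => decide (j ∈ S i))).map ks)) by simp]
  apply before_of <;> simp [kp, kd, ks, ke]

lemma Y2 (j : Fin m) :
    (yvote n k S j).idxOf ke < (yvote n k S j).idxOf kp := by
  unfold yvote
  rw [show ((((List.finRange n).filter (fun i => decide (j ∉ S i))).map ks) ++
      [ke, kp] ++ ((List.finRange (k + 1)).map kd) ++
      (((List.finRange n).filter (fun i => decide (j ∈ S i))).map ks) : List (KCand n k)) =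
      ((((List.finRange n).filter (fun i => decide (j ∉ S i))).map ks) ++ [ke]) ++
      ([kp] ++ ((List.finRange (k + 1)).map kd) ++
      (((List.finRange n).filter (fun i => decide (j ∈ S i))).map ks)) by simp]
  apply before_of <;> simp [kp, kd, ks, ke]

lemma Y3 (j : Fin m) (s : Fin n) (h : j ∈ S s) :
    (yvote n k S j).idxOf kp < (yvote n k S j).idxOf (ks s) := by
  unfold yvote
  rw [show ((((List.finRange n).filter (fun i => decide (j ∉ S i))).map ks) ++
      [ke, kp] ++ ((List.finRange (k + 1)).map kd) ++
      (((List.finRange n).filter (fun i => decide (j ∈ S i))).map ks) : List (KCand n k)) =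
      ((((List.finRange n).filter (fun i => decide (j ∉ S i))).map ks) ++ [ke, kp] ++
      ((List.finRange (k + 1)).map kd)) ++
      (((List.finRange n).filter (fun i => decide (j ∈ S i))).map ks) by simp]
  apply before_of <;> simp [kp, kd, ks, ke, h]

lemma Y4 (j : Fin m) (s : Fin n) (h : j ∉ S s) :
    (yvote n k S j).idxOf (ks s) < (yvote n k S j).idxOf kp := by
  unfold yvote
  rw [show ((((List.finRange n).filter (fun i => decide (j ∉ S i))).map ks) ++
      [ke, kp] ++ ((List.finRange (k + 1)).map kd) ++
      (((List.finRange n).filter (fun i => decide (j ∈ S i))).map ks) : List (KCand n k)) =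
      ((((List.finRange n).filter (fun i => decide (j ∉ S i))).map ks)) ++
      ([ke, kp] ++ ((List.finRange (k + 1)).map kd) ++
      (((List.finRange n).filter (fun i => decide (j ∈ S i))).map ks)) by simp]
  apply before_of <;> simp [kp, kd, ks, ke, h]

end Votes


section Iffs
variable {n k m : ℕ} [BEq (KCand n k)] [LawfulBEq (KCand n k)]

lemma IXpd (i t : Fin (k + 1)) :
    ((xvote n k i).idxOf kp < (xvote n k i).idxOf (kd t)) ↔ t = i :=
  ⟨fun hlt => by by_contra hne; exact Nat.lt_asymm (X2 i t hne) hlt,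
   fun h => by cases h; exact X1 i⟩

lemma IXdp (i t : Fin (k + 1)) :
    ((xvote n k i).idxOf (kd t) < (xvote n k i).idxOf kp) ↔ ¬ t = i :=
  ⟨fun hlt h => by cases h; exact Nat.lt_asymm (X1 i) hlt, fun h => X2 i t h⟩

lemma IXpe (i : Fin (k + 1)) :
    ((xvote n k i).idxOf kp < (xvote n k i).idxOf ke) ↔ True :=
  iff_true_intro (X3 i)

lemma IXep (i : Fin (k + 1)) :
    ((xvote n k i).idxOf ke < (xvote n k i).idxOf kp) ↔ False :=
  iff_false_intro (Nat.lt_asymm (X3 i))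

lemma IXps (i : Fin (k + 1)) (s : Fin n) :
    ((xvote n k i).idxOf kp < (xvote n k i).idxOf (ks s)) ↔ ¬ i = 0 := by
  constructor
  · intro hlt h
    subst h
    exact Nat.lt_asymm (X5 s) hlt
  · intro h
    exact X4 i h s

lemma IXsp (i : Fin (k + 1)) (s : Fin n) :
    ((xvote n k i).idxOf (ks s) < (xvote n k i).idxOf kp) ↔ i = 0 := by
  constructor
  · intro hlt
    by_contra h
    exact Nat.lt_asymm (X4 i h s) hlt
  · rintro rfl
    exact X5 s

variable (S : Fin n → Finset (Fin m))

lemma IYpd (j : Fin m) (t : Fin (k + 1)) :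
    ((yvote n k S j).idxOf kp < (yvote n k S j).idxOf (kd t)) ↔ True :=
  iff_true_intro (Y1 S j t)

lemma IYdp (j : Fin m) (t : Fin (k + 1)) :
    ((yvote n k S j).idxOf (kd t) < (yvote n k S j).idxOf kp) ↔ False :=
  iff_false_intro (Nat.lt_asymm (Y1 S j t))

lemma IYpe (j : Fin m) :
    ((yvote n k S j).idxOf kp < (yvote n k S j).idxOf ke) ↔ False :=
  iff_false_intro (Nat.lt_asymm (Y2 S j))

lemma IYep (j : Fin m) :
    ((yvote n k S j).idxOf ke < (yvote n k S j).idxOf kp) ↔ True :=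
  iff_true_intro (Y2 S j)

lemma IYps (j : Fin m) (s : Fin n) :
    ((yvote n k S j).idxOf kp < (yvote n k S j).idxOf (ks s)) ↔ j ∈ S s := by
  constructor
  · intro hlt
    by_contra h
    exact Nat.lt_asymm (Y4 S j s h) hlt
  · exact Y3 S j s

lemma IYsp (j : Fin m) (s : Fin n) :
    ((yvote n k S j).idxOf (ks s) < (yvote n k S j).idxOf kp) ↔ j ∉ S s := by
  constructor
  · intro hlt h
    exact Nat.lt_asymm (Y3 S j s h) hlt
  · exact Y4 S j s

end Iffs

/-- In the Hitting-Set-to-Condorcet-CCUDV construction, if deleting a set `V'`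
of voters makes `p` the Condorcet winner, then `V'` contains no voter `x_i`,
exactly `k` of the voters `y_j` are retained, and the retained indices
`{b_j : y_j ∉ V'}` form a hitting set of `S` of size `k`. -/
theorem stmt17 {n m : ℕ} (k : ℕ) (hk : 0 < k) (hkm : k ≤ m)
    (S : Fin n → Finset (Fin m))
    (V' : Finset (Fin (k + 1) ⊕ Fin m))
    (votes : List (List (KCand n k)))
    (hv : votes = ((Finset.univ \ V').toList.map
      (Sum.elim (xvote n k) (yvote n k S))))
    (hwin : ∀ d : KCand n k, d ≠ kp → 0 < margin votes kp d) :
    (∀ i : Fin (k + 1), Sum.inl i ∉ V') ∧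
    (Finset.univ.filter (fun j : Fin m => Sum.inr j ∉ V')).card = k ∧
    (∀ i : Fin n, ∃ j : Fin m, Sum.inr j ∉ V' ∧ j ∈ S i) := by
  classical
  subst hv
  have hE := hwin ke (by simp [ke, kp])
  simp only [margin, countP_votes, decide_eq_true_eq, IXpe, IXep, IYpe, IYep,
    and_true, and_false, Finset.filter_false, Finset.card_empty] at hE
  have hD : ∀ t : Fin (k + 1), 0 < margin
      ((Finset.univ \ V').toList.map (Sum.elim (xvote n k) (yvote n k S))) kp (kd t) :=
    fun t => hwin (kd t) (by simp [kd, kp])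
  simp only [margin, countP_votes, decide_eq_true_eq, IXpd, IXdp, IYpd, IYdp,
    and_true, and_false, Finset.filter_false, Finset.card_empty] at hD
  have hsplit : ∀ t : Fin (k + 1),
      (Finset.univ.filter (fun i : Fin (k + 1) => Sum.inl i ∉ V' ∧ t = i)).card +
      (Finset.univ.filter (fun i : Fin (k + 1) => Sum.inl i ∉ V' ∧ ¬ t = i)).card =
      (Finset.univ.filter (fun i : Fin (k + 1) => Sum.inl i ∉ V')).card := by
    intro t
    rw [← Finset.filter_filter, ← Finset.filter_filter]
    exact Finset.card_filter_add_card_filter_not _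
  have hA0 : ∀ t : Fin (k + 1), Sum.inl t ∈ V' →
      (Finset.univ.filter (fun i : Fin (k + 1) => Sum.inl i ∉ V' ∧ t = i)).card = 0 := by
    intro t ht
    rw [Finset.card_eq_zero, Finset.eq_empty_iff_forall_notMem]
    intro x hx
    rw [Finset.mem_filter] at hx
    rcases hx with ⟨-, h1, h2⟩
    cases h2
    exact h1 ht
  have hA1 : ∀ t : Fin (k + 1), Sum.inl t ∉ V' →
      (Finset.univ.filter (fun i : Fin (k + 1) => Sum.inl i ∉ V' ∧ t = i)).card = 1 := by
    intro t ht
    rw [show (Finset.univ.filter (fun i : Fin (k + 1) => Sum.inl i ∉ V' ∧ t = i)) = {t} by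
      ext x
      simp only [Finset.mem_filter, Finset.mem_univ, true_and, Finset.mem_singleton]
      constructor
      · rintro ⟨-, rfl⟩; rfl
      · rintro rfl; exact ⟨ht, rfl⟩]
    simp
  have hc1 : ∀ t : Fin (k + 1), Sum.inl t ∉ V' := by
    intro t
    by_contra ht
    have h1 := hsplit t
    have h2 := hA0 t ht
    have hd := hD t
    omega
  have hXcard : (Finset.univ.filter (fun i : Fin (k + 1) => Sum.inl i ∉ V')).card = k + 1 := by
    rw [Finset.filter_true_of_mem (fun x _ => hc1 x), Finset.card_univ, Fintype.card_fin]
  have hYcard : (Finset.univ.filter (fun j : Fin m => Sum.inr j ∉ V')).card = k := by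
    have h1 := hsplit 0
    have h2 := hA1 0 (hc1 0)
    have hd := hD 0
    omega
  refine ⟨hc1, hYcard, ?_⟩
  intro s
  have hS := hwin (ks s) (by simp [ks, kp])
  simp only [margin, countP_votes, decide_eq_true_eq, IXps, IXsp, IYps, IYsp] at hS
  have e1 : (Finset.univ.filter (fun i : Fin (k + 1) => Sum.inl i ∉ V' ∧ ¬ i = 0)).card = k := by
    have h1 : (Finset.univ.filter (fun i : Fin (k + 1) => Sum.inl i ∉ V' ∧ i = 0)).card +
        (Finset.univ.filter (fun i : Fin (k + 1) => Sum.inl i ∉ V' ∧ ¬ i = 0)).card =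
        (Finset.univ.filter (fun i : Fin (k + 1) => Sum.inl i ∉ V')).card := by
      rw [← Finset.filter_filter, ← Finset.filter_filter]
      exact Finset.card_filter_add_card_filter_not _
    have h2 : (Finset.univ.filter (fun i : Fin (k + 1) => Sum.inl i ∉ V' ∧ i = 0)).card = 1 := by
      rw [show (Finset.univ.filter (fun i : Fin (k + 1) => Sum.inl i ∉ V' ∧ i = 0)) = {0} by
        ext x
        simp only [Finset.mem_filter, Finset.mem_univ, true_and, Finset.mem_singleton]
        constructor
        · rintro ⟨-, rfl⟩; rfl
        · rintro rfl; exact ⟨hc1 0, rfl⟩]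
      simp
    omega
  have e2 : (Finset.univ.filter (fun i : Fin (k + 1) => Sum.inl i ∉ V' ∧ i = 0)).card = 1 := by
    rw [show (Finset.univ.filter (fun i : Fin (k + 1) => Sum.inl i ∉ V' ∧ i = 0)) = {0} by
      ext x
      simp only [Finset.mem_filter, Finset.mem_univ, true_and, Finset.mem_singleton]
      constructor
      · rintro ⟨-, rfl⟩; rfl
      · rintro rfl; exact ⟨hc1 0, rfl⟩]
    simp
  have e3 : (Finset.univ.filter (fun j : Fin m => Sum.inr j ∉ V' ∧ j ∈ S s)).card +
      (Finset.univ.filter (fun j : Fin m => Sum.inr j ∉ V' ∧ j ∉ S s)).card =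
      (Finset.univ.filter (fun j : Fin m => Sum.inr j ∉ V')).card := by
    rw [← Finset.filter_filter, ← Finset.filter_filter]
    exact Finset.card_filter_add_card_filter_not _
  have e4 : 0 < (Finset.univ.filter (fun j : Fin m => Sum.inr j ∉ V' ∧ j ∈ S s)).card := by
    omega
  obtain ⟨j, hj⟩ := Finset.card_pos.1 e4
  rw [Finset.mem_filter] at hj
  exact ⟨j, hj.2⟩
end
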